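/- arXiv:1709.01037 — 4 statements merged into one kernel-verified Lean document; each statement's English description precedes it below -/
import Mathlib

section
/- If a map f: R^d → R^m satisfies (1−ε)‖x−y‖ ≤ ‖f(x)−f(y)‖ ≤ (1+ε)‖x−y‖ for all x,y in a finite set S ⊂ R^d, where ε ∈ [0,1), then the radius ρ of the smallest enclosing ball satisfies (1−ε)ρ(S) ≤ ρ(f(S)) ≤ (1+ε)ρ(S). -/
open MeasureTheory ProbabilityTheory Metric
open Finset

noncomputable def encRadius {d : ℕ} (S : Set (EuclideanSpace ℝ (Fin d))) : ℝ :=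
  ⨅ c : EuclideanSpace ℝ (Fin d), ⨆ x ∈ S, dist x c

section Helpers

section BiSup
variable {β : Type*} [Nonempty β] {S : Set β} {g : β → ℝ} {M : ℝ}

lemma real_biSup_le (hM : 0 ≤ M) (h : ∀ x ∈ S, g x ≤ M) : (⨆ x ∈ S, g x) ≤ M := by
  refine ciSup_le fun x => ?_
  by_cases hx : x ∈ S
  · haveI : Nonempty (x ∈ S) := ⟨hx⟩
    rw [ciSup_const]
    exact h x hx
  · haveI : IsEmpty (x ∈ S) := ⟨hx⟩
    rw [Real.iSup_of_isEmpty]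
    exact hM

lemma le_real_biSup (h : ∀ x ∈ S, g x ≤ M) {x : β} (hx : x ∈ S) :
    g x ≤ ⨆ y ∈ S, g y := by
  have hb : BddAbove (Set.range fun y => ⨆ _ : y ∈ S, g y) := by
    refine ⟨max 0 M, ?_⟩
    rintro _ ⟨y, rfl⟩
    simp only []
    show (⨆ _ : y ∈ S, g y) ≤ max 0 M
    by_cases hy : y ∈ S
    · haveI : Nonempty (y ∈ S) := ⟨hy⟩
      rw [ciSup_const]
      exact (h y hy).trans (le_max_right _ _)
    · haveI : IsEmpty (y ∈ S) := ⟨hy⟩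
      rw [Real.iSup_of_isEmpty]
      exact le_max_left _ _
  calc g x = ⨆ _ : x ∈ S, g x := (ciSup_const (hι := ⟨hx⟩)).symm
    _ ≤ ⨆ y ∈ S, g y := le_ciSup hb x

end BiSup

lemma encRadius_empty {d : ℕ} :
    (⨅ c : EuclideanSpace ℝ (Fin d), ⨆ x ∈ (∅ : Set (EuclideanSpace ℝ (Fin d))), dist x c) = 0 := by
  simp [Real.iSup_of_isEmpty, ciInf_const]


lemma sum_sq_identity {V : Type*} [NormedAddCommGroup V] [InnerProductSpace ℝ V]
    {α : Type*} (t : Finset α) (w : α → ℝ) (v : α → V) (o : V)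
    (hw1 : ∑ i ∈ t, w i = 1) :
    ∑ i ∈ t, ∑ j ∈ t, w i * w j * ‖v i - v j‖ ^ 2
      = 2 * (∑ i ∈ t, w i * ‖v i - o‖ ^ 2) - 2 * ‖∑ i ∈ t, w i • (v i - o)‖ ^ 2 := by
  have hsq : ‖∑ i ∈ t, w i • (v i - o)‖ ^ 2
      = ∑ i ∈ t, ∑ j ∈ t, w i * w j * (inner ℝ (v i - o) (v j - o) : ℝ) := by
    rw [← real_inner_self_eq_norm_sq, sum_inner]
    refine Finset.sum_congr rfl fun i _ => ?_
    rw [real_inner_smul_left, inner_sum, Finset.mul_sum]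
    refine Finset.sum_congr rfl fun j _ => ?_
    rw [real_inner_smul_right]
    ring
  have expand : ∀ i ∈ t, ∀ j ∈ t, w i * w j * ‖v i - v j‖ ^ 2
      = w i * w j * ‖v i - o‖ ^ 2 + w i * w j * ‖v j - o‖ ^ 2
        - 2 * (w i * w j * (inner ℝ (v i - o) (v j - o) : ℝ)) := by
    intro i _ j _
    have e : v i - v j = (v i - o) - (v j - o) := by abel
    rw [e, norm_sub_sq_real]
    ring
  have h1 : ∑ i ∈ t, ∑ j ∈ t, (w i * w j * ‖v i - o‖ ^ 2) = ∑ i ∈ t, w i * ‖v i - o‖ ^ 2 := by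
    refine Finset.sum_congr rfl fun i _ => ?_
    have : ∑ j ∈ t, (w i * w j * ‖v i - o‖ ^ 2) = (w i * ‖v i - o‖ ^ 2) * ∑ j ∈ t, w j := by
      rw [Finset.mul_sum]
      exact Finset.sum_congr rfl fun j _ => by ring
    rw [this, hw1, mul_one]
  have h2 : ∑ i ∈ t, ∑ j ∈ t, (w i * w j * ‖v j - o‖ ^ 2) = ∑ j ∈ t, w j * ‖v j - o‖ ^ 2 := by
    rw [Finset.sum_comm]
    refine Finset.sum_congr rfl fun j _ => ?_
    have : ∑ i ∈ t, (w i * w j * ‖v j - o‖ ^ 2) = (w j * ‖v j - o‖ ^ 2) * ∑ i ∈ t, w i := by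
      rw [Finset.mul_sum]
      exact Finset.sum_congr rfl fun i _ => by ring
    rw [this, hw1, mul_one]
  calc ∑ i ∈ t, ∑ j ∈ t, w i * w j * ‖v i - v j‖ ^ 2
      = ∑ i ∈ t, ∑ j ∈ t, (w i * w j * ‖v i - o‖ ^ 2 + w i * w j * ‖v j - o‖ ^ 2
          - 2 * (w i * w j * (inner ℝ (v i - o) (v j - o) : ℝ))) := by
        refine Finset.sum_congr rfl fun i hi => Finset.sum_congr rfl fun j hj => ?_
        exact expand i hi j hj
    _ = (∑ i ∈ t, ∑ j ∈ t, (w i * w j * ‖v i - o‖ ^ 2))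
        + (∑ i ∈ t, ∑ j ∈ t, (w i * w j * ‖v j - o‖ ^ 2))
        - 2 * (∑ i ∈ t, ∑ j ∈ t, w i * w j * (inner ℝ (v i - o) (v j - o) : ℝ)) := by
        simp [Finset.sum_add_distrib, Finset.sum_sub_distrib, Finset.mul_sum]
    _ = 2 * (∑ i ∈ t, w i * ‖v i - o‖ ^ 2) - 2 * ‖∑ i ∈ t, w i • (v i - o)‖ ^ 2 := by
        rw [h1, h2, hsq]; ring

lemma onePointKirszbraun {E F : Type*} [NormedAddCommGroup E] [InnerProductSpace ℝ E]
    [NormedAddCommGroup F] [InnerProductSpace ℝ F] [FiniteDimensional ℝ F]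
    {ι : Type*} (s : Finset ι) (hs : s.Nonempty) (x : ι → E) (y : ι → F)
    {L : ℝ} (hL : 0 < L)
    (h : ∀ i ∈ s, ∀ j ∈ s, ‖y i - y j‖ ≤ L * ‖x i - x j‖) (p : E) :
    ∃ q : F, ∀ i ∈ s, ‖q - y i‖ ≤ L * ‖p - x i‖ := by
  classical
  set r : ι → ℝ := fun i => L * ‖p - x i‖ with hr
  have hr0 : ∀ i, 0 ≤ r i := fun i => mul_nonneg hL.le (norm_nonneg _)
  set G : F → ℝ := fun q => s.sup' hs (fun i => ‖q - y i‖ ^ 2 - r i ^ 2) with hG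
  have hGcont : Continuous G := by
    rw [continuous_iff_continuousAt]
    intro q
    exact ContinuousAt.finset_sup'_apply hs fun i _ => by fun_prop
  obtain ⟨i0, hi0⟩ := id hs
  have hGy : -r i0 ^ 2 ≤ G (y i0) := by
    have h' : ‖y i0 - y i0‖ ^ 2 - r i0 ^ 2 ≤ G (y i0) :=
      Finset.le_sup' (fun i => ‖y i0 - y i‖ ^ 2 - r i ^ 2) hi0
    simpa using h'
  -- find a global minimizer of G
  set R : ℝ := Real.sqrt (G (y i0) + r i0 ^ 2) + 1 with hR
  have hcne : G (y i0) + r i0 ^ 2 ≥ 0 := by linarith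
  have hRpos : 0 < R := by positivity
  obtain ⟨q0, hq0K, hq0min⟩ : ∃ q0 ∈ closedBall (y i0) R, IsMinOn G (closedBall (y i0) R) q0 :=
    (isCompact_closedBall (y i0) R).exists_isMinOn
      ⟨y i0, mem_closedBall_self hRpos.le⟩ hGcont.continuousOn
  have hmin : ∀ q : F, G q0 ≤ G q := by
    intro q
    by_cases hq : q ∈ closedBall (y i0) R
    · exact hq0min hq
    · have h1 : R < ‖q - y i0‖ := by
        rw [mem_closedBall, dist_eq_norm] at hq
        linarith [not_le.mp hq]
      have h2 : R ^ 2 < ‖q - y i0‖ ^ 2 := by nlinarith [norm_nonneg (q - y i0)]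
      have h3 : G (y i0) + r i0 ^ 2 + 1 ≤ R ^ 2 := by
        have := Real.sq_sqrt hcne
        nlinarith [Real.sqrt_nonneg (G (y i0) + r i0 ^ 2)]
      have h4 : G (y i0) < ‖q - y i0‖ ^ 2 - r i0 ^ 2 := by linarith
      calc G q0 ≤ G (y i0) := hq0min (mem_closedBall_self hRpos.le)
        _ ≤ ‖q - y i0‖ ^ 2 - r i0 ^ 2 := h4.le
        _ ≤ G q := Finset.le_sup' (fun i => ‖q - y i‖ ^ 2 - r i ^ 2) hi0
  set m : ℝ := G q0 with hm
  -- active set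
  set T : Finset ι := s.filter (fun i => ‖q0 - y i‖ ^ 2 - r i ^ 2 = m) with hT
  have hTs : T ⊆ s := Finset.filter_subset _ _
  have hTne : T.Nonempty := by
    obtain ⟨i1, hi1, hval⟩ := Finset.exists_mem_eq_sup' hs (fun i => ‖q0 - y i‖ ^ 2 - r i ^ 2)
    exact ⟨i1, Finset.mem_filter.mpr ⟨hi1, hval.symm⟩⟩
  -- q0 lies in the convex hull of the active points
  have hq0hull : q0 ∈ convexHull ℝ (↑(T.image y) : Set F) := by
    by_contra hq0
    set C : Set F := convexHull ℝ (↑(T.image y) : Set F) with hC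
    have hCne : C.Nonempty := by
      obtain ⟨i1, hi1⟩ := hTne
      exact ⟨y i1, subset_convexHull ℝ _ (by simp [Finset.mem_image]; exact ⟨i1, hi1, rfl⟩)⟩
    have hCconv : Convex ℝ C := convex_convexHull ℝ _
    have hCcomp : IsComplete C :=
      ((T.image y).finite_toSet.isCompact_convexHull ℝ).isComplete
    obtain ⟨v', hv'C, hv'⟩ := exists_norm_eq_iInf_of_complete_convex hCne hCcomp hCconv q0
    have hsep : ∀ z ∈ C, (inner ℝ (q0 - v') (z - v') : ℝ) ≤ 0 :=
      (norm_eq_iInf_iff_real_inner_le_zero hCconv hv'C).mp hv'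
    set v : F := v' - q0 with hv
    have hvne : v ≠ 0 := sub_ne_zero.mpr (fun hcon => hq0 (hcon ▸ hv'C))
    have hv2 : 0 < ‖v‖ ^ 2 := pow_pos (norm_pos_iff.mpr hvne) 2
    have hkey : ∀ i ∈ T, (inner ℝ (q0 - y i) v : ℝ) ≤ -‖v‖ ^ 2 := by
      intro i hi
      have hyC : y i ∈ C := subset_convexHull ℝ _ (by simp [Finset.mem_image]; exact ⟨i, hi, rfl⟩)
      have h1 : (inner ℝ (q0 - v') (y i - v') : ℝ) ≤ 0 := hsep _ hyC
      have e1 : q0 - y i = (v' - y i) - v := by rw [hv]; abel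
      have e2 : (inner ℝ (v' - y i) v : ℝ) ≤ 0 := by
        have : (inner ℝ (v' - y i) v : ℝ) = (inner ℝ (q0 - v') (y i - v') : ℝ) := by
          rw [hv]
          rw [show v' - y i = -(y i - v') by abel, show v' - q0 = -(q0 - v') by abel,
            inner_neg_neg, real_inner_comm]
        linarith
      rw [e1, inner_sub_left, real_inner_self_eq_norm_sq]
      linarith
    -- choose a small step size
    set c : ι → ℝ := fun i => (inner ℝ (q0 - y i) v : ℝ) with hc
    set tstep : ι → ℝ := fun i =>
      if i ∈ T then 1
      else min 1 ((m - (‖q0 - y i‖ ^ 2 - r i ^ 2)) / (2 * (2 * |c i| + ‖v‖ ^ 2))) with htstep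
    have hgap : ∀ i ∈ s, i ∉ T → ‖q0 - y i‖ ^ 2 - r i ^ 2 < m := by
      intro i hi hiT
      refine lt_of_le_of_ne (Finset.le_sup' (fun i => ‖q0 - y i‖ ^ 2 - r i ^ 2) hi) fun hcon => hiT ?_
      exact Finset.mem_filter.mpr ⟨hi, hcon⟩
    have hden : ∀ i, 0 < 2 * (2 * |c i| + ‖v‖ ^ 2) := by
      intro i; positivity
    have htpos : ∀ i ∈ s, 0 < tstep i := by
      intro i hi
      by_cases hiT : i ∈ T
      · simp [htstep, hiT]
      · simp only [htstep, if_neg hiT, lt_min_iff]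
        exact ⟨one_pos, div_pos (by linarith [hgap i hi hiT]) (hden i)⟩
    set t : ℝ := s.inf' hs tstep with ht
    have ht0 : 0 < t := (Finset.lt_inf'_iff hs).mpr htpos
    have ht1 : t ≤ 1 := by
      refine (Finset.inf'_le tstep hi0).trans ?_
      by_cases hiT : i0 ∈ T <;> simp [htstep, hiT]
    have hclaim : ∀ i ∈ s, ‖(q0 + t • v) - y i‖ ^ 2 - r i ^ 2 < m := by
      intro i hi
      have expand : ‖(q0 + t • v) - y i‖ ^ 2
          = ‖q0 - y i‖ ^ 2 + 2 * t * c i + t ^ 2 * ‖v‖ ^ 2 := by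
        have e : (q0 + t • v) - y i = (q0 - y i) + t • v := by abel
        rw [e, norm_add_sq_real, real_inner_smul_right, norm_smul, Real.norm_eq_abs,
          mul_pow, sq_abs]
        ring
      by_cases hiT : i ∈ T
      · have hci : c i ≤ -‖v‖ ^ 2 := hkey i hiT
        have hval : ‖q0 - y i‖ ^ 2 - r i ^ 2 = m := (Finset.mem_filter.mp hiT).2
        nlinarith [mul_le_mul_of_nonneg_left hci ht0.le,
          mul_nonneg (mul_nonneg ht0.le (sub_nonneg.mpr ht1)) hv2.le]
      · have hlt := hgap i hi hiT
        have htle : t ≤ (m - (‖q0 - y i‖ ^ 2 - r i ^ 2)) / (2 * (2 * |c i| + ‖v‖ ^ 2)) := by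
          have h1 : t ≤ tstep i := Finset.inf'_le tstep hi
          rw [htstep] at h1
          simp only [if_neg hiT] at h1
          exact h1.trans (min_le_right _ _)
        have htD : t * (2 * (2 * |c i| + ‖v‖ ^ 2)) ≤ m - (‖q0 - y i‖ ^ 2 - r i ^ 2) :=
          (le_div_iff₀ (hden i)).mp htle
        have habs : c i ≤ |c i| := le_abs_self _
        nlinarith [mul_le_mul_of_nonneg_left habs ht0.le,
          mul_nonneg (mul_nonneg ht0.le (sub_nonneg.mpr ht1)) hv2.le]
    have hGlt : G (q0 + t • v) < m := by
      rw [hG]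
      exact (Finset.sup'_lt_iff hs).mpr hclaim
    exact absurd (hmin (q0 + t • v)) (not_le.mpr hGlt)
  -- extract weights
  rw [Finset.convexHull_eq, Set.mem_setOf_eq] at hq0hull
  obtain ⟨w, hw0, hw1, hwq⟩ := hq0hull
  rw [Finset.centerMass_eq_of_sum_1 _ _ hw1] at hwq
  simp only [id] at hwq
  -- choice of representative indices
  have hrep : ∀ z : F, ∃ i : ι, z ∈ T.image y →
      (i ∈ s ∧ y i = z ∧ ‖q0 - z‖ ^ 2 - r i ^ 2 = m) := by
    intro z
    by_cases hz : z ∈ T.image y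
    · obtain ⟨i, hiT, hiy⟩ := Finset.mem_image.mp hz
      refine ⟨i, fun _ => ⟨hTs hiT, hiy, ?_⟩⟩
      rw [← hiy]
      exact (Finset.mem_filter.mp hiT).2
    · exact ⟨i0, fun hcon => absurd hcon hz⟩
  choose a ha using hrep
  -- final computation
  set T' : Finset F := T.image y with hT'
  have key1 : ∑ z ∈ T', ∑ z' ∈ T', w z * w z' * ‖z - z'‖ ^ 2
      = 2 * (∑ z ∈ T', w z * ‖z - q0‖ ^ 2) := by
    have := sum_sq_identity T' w (fun z => z) q0 hw1
    rw [this]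
    have e : ∑ z ∈ T', w z • (z - q0) = 0 := by
      simp only [smul_sub, Finset.sum_sub_distrib, hwq, ← Finset.sum_smul, hw1, one_smul,
        sub_self]
    rw [e]
    simp
  have key2 : ∑ z ∈ T', ∑ z' ∈ T', w z * w z' * ‖x (a z) - x (a z')‖ ^ 2
      ≤ 2 * ∑ z ∈ T', w z * ‖x (a z) - p‖ ^ 2 := by
    have := sum_sq_identity T' w (fun z => x (a z)) p hw1
    rw [this]
    nlinarith [sq_nonneg ‖∑ z ∈ T', w z • (x (a z) - p)‖]
  have key3 : ∑ z ∈ T', ∑ z' ∈ T', w z * w z' * ‖z - z'‖ ^ 2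
      ≤ ∑ z ∈ T', ∑ z' ∈ T', w z * w z' * (L ^ 2 * ‖x (a z) - x (a z')‖ ^ 2) := by
    refine Finset.sum_le_sum fun z hz => Finset.sum_le_sum fun z' hz' => ?_
    have h1 : ‖z - z'‖ ≤ L * ‖x (a z) - x (a z')‖ := by
      have h1' := h _ (ha z hz).1 _ (ha z' hz').1
      rwa [(ha z hz).2.1, (ha z' hz').2.1] at h1'
    have h2 : ‖z - z'‖ ^ 2 ≤ (L * ‖x (a z) - x (a z')‖) ^ 2 := by
      nlinarith [norm_nonneg (z - z'), norm_nonneg (x (a z) - x (a z')),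
        mul_nonneg hL.le (norm_nonneg (x (a z) - x (a z')))]
    have h3 := mul_le_mul_of_nonneg_left h2
      (mul_nonneg (hw0 z hz) (hw0 z' hz'))
    calc w z * w z' * ‖z - z'‖ ^ 2 ≤ w z * w z' * (L * ‖x (a z) - x (a z')‖) ^ 2 := h3
      _ = w z * w z' * (L ^ 2 * ‖x (a z) - x (a z')‖ ^ 2) := by ring
  have lhs_eq : ∑ z ∈ T', w z * ‖z - q0‖ ^ 2 = m + ∑ z ∈ T', w z * r (a z) ^ 2 := by
    have : ∀ z ∈ T', w z * ‖z - q0‖ ^ 2 = w z * m + w z * r (a z) ^ 2 := by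
      intro z hz
      have e : ‖z - q0‖ ^ 2 = ‖q0 - z‖ ^ 2 := by rw [norm_sub_rev]
      rw [e, show ‖q0 - z‖ ^ 2 = m + r (a z) ^ 2 from by linarith [(ha z hz).2.2]]
      ring
    rw [Finset.sum_congr rfl this, Finset.sum_add_distrib, ← Finset.sum_mul, hw1]
    ring
  have rhs_le : ∑ z ∈ T', w z * (L ^ 2 * ‖x (a z) - p‖ ^ 2) = ∑ z ∈ T', w z * r (a z) ^ 2 := by
    refine Finset.sum_congr rfl fun z hz => ?_
    have e : r (a z) = L * ‖x (a z) - p‖ := by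
      show L * ‖p - x (a z)‖ = L * ‖x (a z) - p‖
      rw [norm_sub_rev]
    rw [e]
    ring
  have hm0 : m ≤ 0 := by
    have c1 : ∑ z ∈ T', ∑ z' ∈ T', w z * w z' * (L ^ 2 * ‖x (a z) - x (a z')‖ ^ 2)
        = L ^ 2 * ∑ z ∈ T', ∑ z' ∈ T', w z * w z' * ‖x (a z) - x (a z')‖ ^ 2 := by
      rw [Finset.mul_sum]
      refine Finset.sum_congr rfl fun z _ => ?_
      rw [Finset.mul_sum]
      exact Finset.sum_congr rfl fun z' _ => by ring
    have c2 : L ^ 2 * (2 * ∑ z ∈ T', w z * ‖x (a z) - p‖ ^ 2)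
        = 2 * ∑ z ∈ T', w z * (L ^ 2 * ‖x (a z) - p‖ ^ 2) := by
      have e : ∀ z ∈ T', w z * (L ^ 2 * ‖x (a z) - p‖ ^ 2)
          = L ^ 2 * (w z * ‖x (a z) - p‖ ^ 2) := fun z _ => by ring
      rw [Finset.sum_congr rfl e, ← Finset.mul_sum]
      ring
    have hL2 : 0 ≤ L ^ 2 := sq_nonneg L
    have := key1 ▸ key3
    have chain : 2 * (m + ∑ z ∈ T', w z * r (a z) ^ 2)
        ≤ 2 * ∑ z ∈ T', w z * r (a z) ^ 2 := by
      calc 2 * (m + ∑ z ∈ T', w z * r (a z) ^ 2)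
          = 2 * (∑ z ∈ T', w z * ‖z - q0‖ ^ 2) := by rw [lhs_eq]
        _ = ∑ z ∈ T', ∑ z' ∈ T', w z * w z' * ‖z - z'‖ ^ 2 := key1.symm
        _ ≤ ∑ z ∈ T', ∑ z' ∈ T', w z * w z' * (L ^ 2 * ‖x (a z) - x (a z')‖ ^ 2) := key3
        _ = L ^ 2 * ∑ z ∈ T', ∑ z' ∈ T', w z * w z' * ‖x (a z) - x (a z')‖ ^ 2 := c1
        _ ≤ L ^ 2 * (2 * ∑ z ∈ T', w z * ‖x (a z) - p‖ ^ 2) :=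
            mul_le_mul_of_nonneg_left key2 hL2
        _ = 2 * ∑ z ∈ T', w z * (L ^ 2 * ‖x (a z) - p‖ ^ 2) := c2
        _ = 2 * ∑ z ∈ T', w z * r (a z) ^ 2 := by rw [rhs_le]
    linarith
  -- conclude
  refine ⟨q0, fun i hi => ?_⟩
  have h1 : ‖q0 - y i‖ ^ 2 - r i ^ 2 ≤ m := Finset.le_sup' (fun i => ‖q0 - y i‖ ^ 2 - r i ^ 2) hi
  have h2 : ‖q0 - y i‖ ^ 2 ≤ r i ^ 2 := by linarith
  have h3 : ‖q0 - y i‖ ≤ r i := by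
    nlinarith [norm_nonneg (q0 - y i), hr0 i]
  exact h3

end Helpers

section Main

variable {d : ℕ}

lemma dist_le_biSup {S : Set (EuclideanSpace ℝ (Fin d))} (hS : S.Finite)
    {x c : EuclideanSpace ℝ (Fin d)} (hx : x ∈ S) :
    dist x c ≤ ⨆ y ∈ S, dist y c := by
  have hne : hS.toFinset.Nonempty := by
    rw [Set.Finite.toFinset_nonempty]; exact ⟨x, hx⟩
  exact le_real_biSup (S := S) (g := fun y => dist y c)
    (M := hS.toFinset.sup' hne fun y => dist y c)
    (fun z hz => Finset.le_sup' (fun y => dist y c) (hS.mem_toFinset.mpr hz)) hx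

lemma biSup_nonneg {S : Set (EuclideanSpace ℝ (Fin d))} (hS : S.Finite)
    (hne : S.Nonempty) (c : EuclideanSpace ℝ (Fin d)) :
    0 ≤ ⨆ y ∈ S, dist y c := by
  obtain ⟨x, hx⟩ := hne
  exact dist_nonneg.trans (dist_le_biSup hS hx)

lemma encRadius_bddBelow {S : Set (EuclideanSpace ℝ (Fin d))} (hS : S.Finite)
    (hne : S.Nonempty) :
    BddBelow (Set.range fun c : EuclideanSpace ℝ (Fin d) => ⨆ x ∈ S, dist x c) := by
  refine ⟨0, ?_⟩
  rintro _ ⟨c, rfl⟩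
  exact biSup_nonneg hS hne c

lemma encRadius_nonneg {S : Set (EuclideanSpace ℝ (Fin d))} (hS : S.Finite)
    (hne : S.Nonempty) : 0 ≤ encRadius S :=
  le_ciInf fun c => biSup_nonneg hS hne c

end Main

/-- JL-type distance preservation implies preservation of smallest enclosing ball radii. -/
theorem stmt_3 {d m : ℕ} (S : Set (EuclideanSpace ℝ (Fin d))) (hS : S.Finite)
    (ε : ℝ) (hε0 : 0 ≤ ε) (hε1 : ε < 1)
    (f : EuclideanSpace ℝ (Fin d) → EuclideanSpace ℝ (Fin m))
    (hf : ∀ x ∈ S, ∀ y ∈ S,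
      (1 - ε) * ‖x - y‖ ≤ ‖f x - f y‖ ∧ ‖f x - f y‖ ≤ (1 + ε) * ‖x - y‖) :
    (1 - ε) * encRadius S ≤ encRadius (f '' S) ∧
      encRadius (f '' S) ≤ (1 + ε) * encRadius S := by
  rcases S.eq_empty_or_nonempty with rfl | hne
  · rw [Set.image_empty]
    rw [show encRadius (∅ : Set (EuclideanSpace ℝ (Fin d))) = 0 from encRadius_empty,
      show encRadius (∅ : Set (EuclideanSpace ℝ (Fin m))) = 0 from encRadius_empty]
    norm_num
  obtain ⟨x0, hx0⟩ := hne
  have hne : S.Nonempty := ⟨x0, hx0⟩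
  have hfne : (f '' S).Nonempty := ⟨f x0, ⟨x0, hx0, rfl⟩⟩
  have hfS : (f '' S).Finite := hS.image f
  have hsfne : hS.toFinset.Nonempty := by
    rw [Set.Finite.toFinset_nonempty]; exact hne
  have h1ε : (0:ℝ) < 1 - ε := by linarith
  have h1ε' : (0:ℝ) < 1 + ε := by linarith
  constructor
  · -- lower bound
    refine le_ciInf fun c' => ?_
    have hLip : ∀ a ∈ hS.toFinset, ∀ b ∈ hS.toFinset,
        ‖a - b‖ ≤ (1 - ε)⁻¹ * ‖f a - f b‖ := by
      intro a ha b hb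
      rw [Set.Finite.mem_toFinset] at ha hb
      rw [le_inv_mul_iff₀ h1ε]
      exact (hf a ha b hb).1
    obtain ⟨q, hq⟩ := onePointKirszbraun hS.toFinset hsfne f id
      (inv_pos.mpr h1ε) hLip c'
    set B := ⨆ z ∈ f '' S, dist z c' with hB
    have hBnn : 0 ≤ B := biSup_nonneg hfS hfne c'
    have hSle : encRadius S ≤ (1 - ε)⁻¹ * B := by
      refine (ciInf_le (encRadius_bddBelow hS hne) q).trans ?_
      refine real_biSup_le (by positivity) fun a ha => ?_
      have h1 : dist a q = ‖q - a‖ := by rw [dist_eq_norm, norm_sub_rev]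
      have h2 : ‖q - a‖ ≤ (1 - ε)⁻¹ * ‖c' - f a‖ := hq a (hS.mem_toFinset.mpr ha)
      have h3 : ‖c' - f a‖ = dist (f a) c' := by rw [dist_eq_norm, norm_sub_rev]
      have h4 : dist (f a) c' ≤ B := dist_le_biSup hfS ⟨a, ha, rfl⟩
      rw [h1]
      calc ‖q - a‖ ≤ (1 - ε)⁻¹ * ‖c' - f a‖ := h2
        _ = (1 - ε)⁻¹ * dist (f a) c' := by rw [h3]
        _ ≤ (1 - ε)⁻¹ * B := by
            exact mul_le_mul_of_nonneg_left h4 (inv_nonneg.mpr h1ε.le)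
    calc (1 - ε) * encRadius S ≤ (1 - ε) * ((1 - ε)⁻¹ * B) :=
          mul_le_mul_of_nonneg_left hSle h1ε.le
      _ = B := by rw [← mul_assoc, mul_inv_cancel₀ h1ε.ne', one_mul]
  · -- upper bound
    have key : ∀ η : ℝ, 0 < η → encRadius (f '' S) ≤ (1 + ε) * (encRadius S + η) := by
      intro η hη
      obtain ⟨c, hc⟩ := exists_lt_of_ciInf_lt
        (show encRadius S < encRadius S + η by linarith)
      have hLip : ∀ a ∈ hS.toFinset, ∀ b ∈ hS.toFinset,
          ‖f a - f b‖ ≤ (1 + ε) * ‖id a - id b‖ := by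
        intro a ha b hb
        rw [Set.Finite.mem_toFinset] at ha hb
        exact (hf a ha b hb).2
      obtain ⟨q, hq⟩ := onePointKirszbraun hS.toFinset hsfne id f h1ε' hLip c
      have hρ0 : 0 ≤ encRadius S := encRadius_nonneg hS hne
      refine (ciInf_le (encRadius_bddBelow hfS hfne) q).trans ?_
      refine real_biSup_le (by positivity) ?_
      rintro z ⟨a, ha, rfl⟩
      have h1 : dist (f a) q = ‖q - f a‖ := by rw [dist_eq_norm, norm_sub_rev]
      have h2 : ‖q - f a‖ ≤ (1 + ε) * ‖c - a‖ := hq a (hS.mem_toFinset.mpr ha)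
      have h3 : ‖c - a‖ = dist a c := by rw [dist_eq_norm, norm_sub_rev]
      have h4 : dist a c ≤ encRadius S + η :=
        (dist_le_biSup hS ha).trans hc.le
      rw [h1]
      calc ‖q - f a‖ ≤ (1 + ε) * ‖c - a‖ := h2
        _ = (1 + ε) * dist a c := by rw [h3]
        _ ≤ (1 + ε) * (encRadius S + η) := mul_le_mul_of_nonneg_left h4 h1ε'.le
    refine le_of_forall_pos_le_add fun η hη => ?_
    have := key (η / (1 + ε)) (by positivity)
    calc encRadius (f '' S) ≤ (1 + ε) * (encRadius S + η / (1 + ε)) := this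
      _ = (1 + ε) * encRadius S + η := by field_simp
end

section
/- Assuming Slepian's inequality P{max_i X_i ≤ t} ≤ P{max_i Y_i ≤ t} for the Gaussian processes X_i = ⟨x_i, g⟩ and Y_i = ⟨y_i, g⟩ whenever ‖x_i − x_j‖ ≥ ‖y_i − y_j‖ for all i<j, it follows that if both smallest enclosing balls are centered at the origin, then ρ({x_1,...,x_k}) ≥ ρ({y_1,...,y_k}). -/
open MeasureTheory ProbabilityTheory Metric

noncomputable def stdGaussian (d : ℕ) : Measure (EuclideanSpace ℝ (Fin d)) :=
  Measure.map (MeasurableEquiv.toLp 2 (Fin d → ℝ))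
    (Measure.pi fun _ : Fin d => gaussianReal 0 1)


open scoped ENNReal NNReal Real
open Set

section Aux

-- Piece 1: lintegral of product over pi measure
lemma lintegral_pi_prod : ∀ {n : ℕ} (μ : Fin n → Measure ℝ), (∀ i, SigmaFinite (μ i)) →
    ∀ (f : Fin n → ℝ → ℝ≥0∞), (∀ i, Measurable (f i)) →
    ∫⁻ x, ∏ i, f i (x i) ∂Measure.pi μ = ∏ i, ∫⁻ u, f i u ∂μ i := by
  intro n
  induction n with
  | zero => intro μ _ f _; simp [Measure.pi_of_empty]
  | succ n ih =>
    intro μ hσ f hf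
    haveI := hσ
    have hmp := (measurePreserving_piFinSuccAbove μ 0).symm
    rw [← hmp.lintegral_comp (f := fun x => ∏ i, f i (x i))
      (Finset.measurable_prod _ (fun i _ => (hf i).comp (measurable_pi_apply i)))]
    simp only [MeasurableEquiv.piFinSuccAbove_symm_apply, Fin.insertNthEquiv, Equiv.coe_fn_mk,
      Fin.insertNth_zero, Fin.zero_succAbove, cast_eq]
    calc _ = ∫⁻ (p : ℝ × (Fin n → ℝ)), f 0 p.1 * ∏ i : Fin n, f i.succ (p.2 i)
          ∂(μ 0).prod (Measure.pi fun j => μ (Fin.succ j)) := by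
          congr 1; funext p; simp [Fin.prod_univ_succ]
      _ = (∫⁻ u, f 0 u ∂μ 0) * ∫⁻ x, ∏ i : Fin n, f i.succ (x i)
            ∂(Measure.pi fun j => μ (Fin.succ j)) := by
          exact lintegral_prod_mul (hf 0).aemeasurable
            (Finset.measurable_prod _ (fun (i : Fin n) _ => (hf i.succ).comp (measurable_pi_apply i))).aemeasurable
      _ = ∏ i, ∫⁻ u, f i u ∂μ i := by
          rw [ih _ (fun j => hσ _) _ (fun j => hf j.succ), Fin.prod_univ_succ]

-- Piece 2
lemma pi_gaussian_eq (d : ℕ) : (Measure.pi fun _ : Fin d => gaussianReal 0 1)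
    = (volume : Measure (Fin d → ℝ)).withDensity (fun x => ∏ i, gaussianPDF 0 1 (x i)) := by
  refine Measure.pi_eq (fun s hs => ?_)
  rw [withDensity_apply _ (MeasurableSet.univ_pi hs)]
  have key : ∫⁻ x in Set.univ.pi s, ∏ i, gaussianPDF 0 1 (x i) ∂(volume : Measure (Fin d → ℝ))
      = ∫⁻ x, ∏ i, (s i).indicator (gaussianPDF 0 1) (x i) ∂(volume : Measure (Fin d → ℝ)) := by
    rw [← lintegral_indicator (MeasurableSet.univ_pi hs)]
    congr 1
    funext x
    by_cases hx : x ∈ Set.univ.pi s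
    · rw [Set.indicator_of_mem hx]
      exact Finset.prod_congr rfl fun i _ => (Set.indicator_of_mem (hx i (Set.mem_univ i)) _).symm
    · rw [Set.indicator_of_notMem hx]
      have : ∃ i, x i ∉ s i := by
        by_contra h
        push_neg at h
        exact hx (fun i _ => h i)
      obtain ⟨i, hi⟩ := this
      exact (Finset.prod_eq_zero (Finset.mem_univ i) (Set.indicator_of_notMem hi _)).symm
  rw [key, volume_pi, lintegral_pi_prod _ (fun _ => inferInstance) _
    (fun i => (measurable_gaussianPDF 0 1).indicator (hs i))]
  refine Finset.prod_congr rfl fun i _ => ?_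
  rw [lintegral_indicator (hs i), gaussianReal_of_var_ne_zero 0 one_ne_zero,
    withDensity_apply _ (hs i)]

-- generic: pushforward of withDensity along a measurable equiv
lemma map_withDensity_equiv {α β : Type*} [MeasurableSpace α] [MeasurableSpace β]
    (e : α ≃ᵐ β) (μ : Measure α) (F : α → ℝ≥0∞) (hF : Measurable F) :
    Measure.map e (μ.withDensity F) = (Measure.map e μ).withDensity (F ∘ e.symm) := by
  ext s hs
  rw [Measure.map_apply e.measurable hs, withDensity_apply _ (e.measurable hs),
    withDensity_apply _ hs, ← lintegral_indicator (e.measurable hs),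
    ← lintegral_indicator hs, lintegral_map ((hF.comp e.symm.measurable).indicator hs)
      e.measurable]
  congr 1
  funext a
  by_cases ha : e a ∈ s
  · rw [Set.indicator_of_mem ha, Set.indicator_of_mem (by simpa using ha)]
    simp
  · rw [Set.indicator_of_notMem ha, Set.indicator_of_notMem (by simpa using ha)]

noncomputable def stdDens (d : ℕ) : EuclideanSpace ℝ (Fin d) → ℝ≥0∞ :=
  fun g => ENNReal.ofReal ((Real.sqrt (2 * π))⁻¹ ^ d * Real.exp (-‖g‖ ^ 2 / 2))

lemma stdDens_meas (d : ℕ) : Measurable (stdDens d) := by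
  apply Measurable.ennreal_ofReal
  exact (((measurable_norm.pow_const 2).neg.div_const 2).exp.const_mul _)

set_option maxHeartbeats 1000000 in
lemma stdGaussian_eq_withDensity (d : ℕ) :
    stdGaussian d = (volume : Measure (EuclideanSpace ℝ (Fin d))).withDensity (stdDens d) := by
  set e := (MeasurableEquiv.toLp 2 (Fin d → ℝ)).symm with he
  set F : (Fin d → ℝ) → ℝ≥0∞ := fun x => ∏ i, gaussianPDF 0 1 (x i) with hF
  have hFm : Measurable F :=
    Finset.measurable_prod _ fun i _ => (measurable_gaussianPDF 0 1).comp (measurable_pi_apply i)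
  have h2 : Measure.map (⇑e.symm) (volume : Measure (Fin d → ℝ))
      = (volume : Measure (EuclideanSpace ℝ (Fin d))) :=
    ((EuclideanSpace.volume_preserving_symm_measurableEquiv_toLp (Fin d)).symm e).map_eq
  have h3 : (F ∘ ⇑e.symm.symm) = stdDens d := by
    funext g
    simp only [Function.comp_apply, stdDens, hF]
    have h1 : ∀ i, e.symm.symm g i = g i := fun i => rfl
    simp_rw [h1, gaussianPDF, ← ENNReal.ofReal_prod_of_nonneg
      (fun i _ => gaussianPDFReal_nonneg 0 1 (g i))]
    congr 1
    simp only [gaussianPDFReal, NNReal.coe_one, mul_one, sub_zero, Finset.prod_mul_distrib,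
      Finset.prod_const, Finset.card_univ, Fintype.card_fin, ← Real.exp_sum]
    congr 1
    rw [← Finset.sum_div, EuclideanSpace.norm_eq, Real.sq_sqrt (by positivity),
      ← Finset.sum_neg_distrib]
    norm_num
  calc stdGaussian d
      = Measure.map (⇑e.symm) ((volume : Measure (Fin d → ℝ)).withDensity F) := by
        rw [_root_.stdGaussian, pi_gaussian_eq]; rfl
    _ = (Measure.map (⇑e.symm) (volume : Measure (Fin d → ℝ))).withDensity (F ∘ ⇑e.symm.symm) :=
        map_withDensity_equiv e.symm (volume : Measure (Fin d → ℝ)) F hFm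
    _ = (volume : Measure (EuclideanSpace ℝ (Fin d))).withDensity (stdDens d) := by
        rw [h3]; exact congrArg (fun m => Measure.withDensity m (stdDens d)) h2

lemma stdGaussian_map_isometry {d : ℕ}
    (f : EuclideanSpace ℝ (Fin d) ≃ₗᵢ[ℝ] EuclideanSpace ℝ (Fin d)) :
    Measure.map f (stdGaussian d) = stdGaussian d := by
  rw [stdGaussian_eq_withDensity]
  have : (f : EuclideanSpace ℝ (Fin d) → EuclideanSpace ℝ (Fin d))
      = (f.toHomeomorph.toMeasurableEquiv : _ → _) := rfl
  rw [this, map_withDensity_equiv _ _ _ (stdDens_meas d)]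
  rw [show Measure.map f.toHomeomorph.toMeasurableEquiv volume = volume from f.measurePreserving.map_eq]
  have : stdDens d ∘ f.toHomeomorph.toMeasurableEquiv.symm = stdDens d := by
    funext g
    simp only [Function.comp_apply, stdDens]
    rw [show ‖f.toHomeomorph.toMeasurableEquiv.symm g‖ = ‖(f.symm : _ → _) g‖ from rfl,
      f.symm.norm_map]
  rw [this, ← stdGaussian_eq_withDensity]

instance stdGaussian_prob (d : ℕ) : IsProbabilityMeasure (stdGaussian d) := by
  rw [_root_.stdGaussian]
  exact Measure.isProbabilityMeasure_map (MeasurableEquiv.measurable _).aemeasurable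

lemma pi_map_eval {d : ℕ} (i0 : Fin d) :
    Measure.map (fun x : Fin d → ℝ => x i0) (Measure.pi fun _ => gaussianReal 0 1)
      = gaussianReal 0 1 := by
  ext s hs
  rw [Measure.map_apply (measurable_pi_apply i0) hs]
  have : (fun x : Fin d → ℝ => x i0) ⁻¹' s = Set.univ.pi (fun j => if j = i0 then s else Set.univ) := by
    ext x
    simp only [Set.mem_preimage, Set.mem_pi, Set.mem_univ, true_implies]
    constructor
    · intro h j; by_cases hj : j = i0 <;> simp [hj, h]
    · intro h; simpa using h i0
  rw [this, Measure.pi_pi]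
  simp [apply_ite (gaussianReal 0 1), Finset.prod_ite_eq', measure_univ]

lemma stdGaussian_map_eval {d : ℕ} (i0 : Fin d) :
    Measure.map (fun g : EuclideanSpace ℝ (Fin d) => g i0) (stdGaussian d)
      = gaussianReal 0 1 := by
  have m1 : Measurable (fun g : EuclideanSpace ℝ (Fin d) => g i0) :=
    (measurable_pi_apply i0).comp (WithLp.measurable_ofLp 2 (Fin d → ℝ))
  rw [_root_.stdGaussian,
    Measure.map_map m1 (MeasurableEquiv.toLp 2 (Fin d → ℝ)).measurable]
  exact pi_map_eval i0

lemma stdGaussian_map_inner {d : ℕ} (v : EuclideanSpace ℝ (Fin d)) (hv : v ≠ 0) :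
    Measure.map (fun g : EuclideanSpace ℝ (Fin d) => (inner ℝ v g : ℝ)) (stdGaussian d)
      = gaussianReal 0 (⟨‖v‖ ^ 2, sq_nonneg _⟩ : ℝ≥0) := by
  have hd : 0 < d := by
    by_contra h
    push_neg at h
    interval_cases d
    · exact hv (Subsingleton.elim _ _)
  set i0 : Fin d := ⟨0, hd⟩
  have hnv : ‖v‖ ≠ 0 := norm_ne_zero_iff.mpr hv
  set u : EuclideanSpace ℝ (Fin d) := ‖v‖⁻¹ • v with hu
  have hnu : ‖u‖ = 1 := by
    rw [hu, norm_smul, norm_inv, norm_norm, inv_mul_cancel₀ hnv]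
  set e0 : EuclideanSpace ℝ (Fin d) := EuclideanSpace.single i0 (1:ℝ) with he0
  have hne0 : ‖u‖ = ‖e0‖ := by
    rw [hnu, he0, EuclideanSpace.norm_single]; simp
  set f : EuclideanSpace ℝ (Fin d) ≃ₗᵢ[ℝ] EuclideanSpace ℝ (Fin d) :=
    Submodule.reflection (ℝ ∙ (u - e0))ᗮ with hf
  have hfu : f u = e0 := Submodule.reflection_sub hne0
  have key : (fun g : EuclideanSpace ℝ (Fin d) => (inner ℝ v g : ℝ))
      = (fun r : ℝ => ‖v‖ * r) ∘ (fun w : EuclideanSpace ℝ (Fin d) => w i0) ∘ (f : _ → _) := by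
    funext g
    have h1 : (inner ℝ u g : ℝ) = ‖v‖⁻¹ * inner ℝ v g := by rw [hu, real_inner_smul_left]
    have h2 : (inner ℝ u g : ℝ) = (f g) i0 := by
      rw [← f.inner_map_map u g, hfu, he0, EuclideanSpace.inner_single_left]
      simp
    show (inner ℝ v g : ℝ) = ‖v‖ * (f g) i0
    rw [← h2, h1, ← mul_assoc, mul_inv_cancel₀ hnv, one_mul]
  have m1 : Measurable (fun g : EuclideanSpace ℝ (Fin d) => g i0) :=
    (measurable_pi_apply i0).comp (WithLp.measurable_ofLp 2 (Fin d → ℝ))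
  have m2 : Measurable (f : EuclideanSpace ℝ (Fin d) → EuclideanSpace ℝ (Fin d)) :=
    f.continuous.measurable
  rw [key]
  calc Measure.map ((fun r : ℝ => ‖v‖ * r) ∘ (fun w : EuclideanSpace ℝ (Fin d) => w i0)
        ∘ (f : EuclideanSpace ℝ (Fin d) → EuclideanSpace ℝ (Fin d))) (stdGaussian d)
      = Measure.map (fun r : ℝ => ‖v‖ * r) (Measure.map
          ((fun w : EuclideanSpace ℝ (Fin d) => w i0)
            ∘ (f : EuclideanSpace ℝ (Fin d) → EuclideanSpace ℝ (Fin d))) (stdGaussian d)) :=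
        (Measure.map_map (measurable_const_mul ‖v‖) (m1.comp m2)).symm
    _ = Measure.map (fun r : ℝ => ‖v‖ * r) (Measure.map (fun w : EuclideanSpace ℝ (Fin d) => w i0)
          (Measure.map (f : EuclideanSpace ℝ (Fin d) → EuclideanSpace ℝ (Fin d))
            (stdGaussian d))) := by
        rw [Measure.map_map m1 m2]
    _ = gaussianReal 0 (⟨‖v‖ ^ 2, sq_nonneg _⟩ : ℝ≥0) := by
        rw [stdGaussian_map_isometry f, stdGaussian_map_eval i0]
        have := gaussianReal_map_const_mul (μ := 0) (v := 1) ‖v‖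
        simp only [mul_zero, mul_one] at this
        rw [show (fun r : ℝ => ‖v‖ * r) = (‖v‖ * ·) from rfl, this]
        rfl

-- scaling
lemma gaussian_tail_scale {σ : ℝ} (hσ : 0 < σ) (t : ℝ) :
    gaussianReal 0 (⟨σ ^ 2, sq_nonneg _⟩ : ℝ≥0) (Ioi t) = gaussianReal 0 1 (Ioi (t / σ)) := by
  have h := gaussianReal_map_const_mul (μ := 0) (v := 1) σ
  simp only [mul_zero, mul_one] at h
  rw [show gaussianReal 0 (⟨σ ^ 2, sq_nonneg _⟩ : ℝ≥0) = Measure.map (fun x => σ * x) (gaussianReal 0 1)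
    from h.symm, Measure.map_apply (measurable_const_mul σ) measurableSet_Ioi]
  congr 1
  ext u
  simp only [mem_preimage, mem_Ioi]
  rw [div_lt_iff₀ hσ, mul_comm]

-- upper tail bound
lemma gaussian_tail_upper {a : ℝ} (ha : 1 ≤ a) :
    gaussianReal 0 1 (Ioi a) ≤ ENNReal.ofReal (rexp (-a ^ 2 / 2)) := by
  rw [gaussianReal_apply_eq_integral 0 one_ne_zero]
  apply ENNReal.ofReal_le_ofReal
  set c : ℝ := (Real.sqrt (2 * π))⁻¹ with hc
  have hc1 : c ≤ 1 := by
    rw [hc]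
    apply inv_le_one_of_one_le₀
    rw [show (1:ℝ) = Real.sqrt 1 by simp]
    apply Real.sqrt_le_sqrt
    nlinarith [Real.pi_gt_three]
  have hcpos : 0 < c := by rw [hc]; positivity
  have key : ∫ u in Ioi a, gaussianPDFReal 0 1 u
      ≤ ∫ u in Ioi a, (c * rexp (-a ^ 2 / 2 + a)) * rexp (-u) := by
    apply setIntegral_mono_on (integrable_gaussianPDFReal 0 1).integrableOn
    · apply Integrable.const_mul
      have := exp_neg_integrableOn_Ioi a (zero_lt_one (α := ℝ))
      simpa [IntegrableOn] using this
    · exact measurableSet_Ioi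
    · intro u hu
      rw [mem_Ioi] at hu
      simp only [gaussianPDFReal, NNReal.coe_one, mul_one, sub_zero]
      rw [mul_assoc, ← Real.exp_add]
      apply mul_le_mul_of_nonneg_left _ hcpos.le
      apply Real.exp_le_exp.mpr
      nlinarith
  calc ∫ u in Ioi a, gaussianPDFReal 0 1 u ≤ _ := key
    _ = c * rexp (-a ^ 2 / 2 + a) * rexp (-a) := by
        rw [MeasureTheory.integral_const_mul, integral_exp_neg_Ioi]
    _ ≤ rexp (-a ^ 2 / 2) := by
        rw [mul_assoc, ← Real.exp_add]
        calc c * rexp (-a ^ 2 / 2 + a + -a) ≤ 1 * rexp (-a ^ 2 / 2 + a + -a) := by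
              apply mul_le_mul_of_nonneg_right hc1 (Real.exp_nonneg _)
          _ = rexp (-a ^ 2 / 2) := by rw [one_mul]; congr 1; ring

-- lower tail bound
lemma gaussian_tail_lower {a : ℝ} (ha : 0 ≤ a) :
    ENNReal.ofReal ((Real.sqrt (2 * π))⁻¹ * rexp (-(a + 1) ^ 2 / 2))
      ≤ gaussianReal 0 1 (Ioi a) := by
  rw [gaussianReal_apply_eq_integral 0 one_ne_zero]
  apply ENNReal.ofReal_le_ofReal
  set c : ℝ := (Real.sqrt (2 * π))⁻¹ with hc
  have hcpos : 0 < c := by rw [hc]; positivity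
  have step1 : c * rexp (-(a + 1) ^ 2 / 2) ≤ ∫ u in Ioc a (a + 1), gaussianPDFReal 0 1 u := by
    have : ∫ u in Ioc a (a + 1), c * rexp (-(a + 1) ^ 2 / 2)
        = c * rexp (-(a + 1) ^ 2 / 2) := by
      rw [setIntegral_const, Real.volume_real_Ioc]
      norm_num
    rw [← this]
    apply setIntegral_mono_on ((integrableOn_const_iff).mpr (Or.inr (by rw [Real.volume_Ioc]; exact ENNReal.ofReal_lt_top)))
      (integrable_gaussianPDFReal 0 1).integrableOn measurableSet_Ioc
    intro u hu
    rw [mem_Ioc] at hu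
    simp only [gaussianPDFReal, NNReal.coe_one, mul_one, sub_zero]
    apply mul_le_mul_of_nonneg_left _ hcpos.le
    apply Real.exp_le_exp.mpr
    have h1 : u ^ 2 ≤ (a + 1) ^ 2 := by nlinarith [hu.1, hu.2]
    linarith
  calc c * rexp (-(a + 1) ^ 2 / 2) ≤ _ := step1
    _ ≤ ∫ u in Ioi a, gaussianPDFReal 0 1 u := by
        apply setIntegral_mono_set (integrable_gaussianPDFReal 0 1).integrableOn
          (ae_of_all _ (fun u => gaussianPDFReal_nonneg 0 1 u))
        exact HasSubset.Subset.eventuallyLE Ioc_subset_Ioi_self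

end Aux

/-- Assuming Slepian'\''s inequality for the processes ⟨xᵢ,g⟩ and ⟨yᵢ,g⟩, if the pairwise
distances of the xᵢ dominate those of the yᵢ and both smallest enclosing balls are
centered at the origin, then R = max‖xᵢ‖ dominates R'\'' = max‖yᵢ‖. -/
theorem stmt_14 {d k : ℕ} (hk : 0 < k)
    (x y : Fin k → EuclideanSpace ℝ (Fin d))
    (hdist : ∀ i j : Fin k, i < j → ‖y i - y j‖ ≤ ‖x i - x j‖)
    (R R' : ℝ)
    (hR : IsGreatest (Set.range fun i => ‖x i‖) R)
    (hR' : IsGreatest (Set.range fun i => ‖y i‖) R')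
    (hRpos : 0 < R) (hR'pos : 0 < R')
    (hslepian : ∀ t : ℝ,
      stdGaussian d {g | ∀ i, (inner ℝ (x i) g : ℝ) ≤ t} ≤
        stdGaussian d {g | ∀ i, (inner ℝ (y i) g : ℝ) ≤ t}) :
    R' ≤ R := by
  by_contra hcon
  push_neg at hcon
  set μ := stdGaussian d with hμ
  set γ := gaussianReal 0 1 with hγ
  obtain ⟨i0, hi0⟩ := hR'.1
  simp only at hi0
  have hyne : y i0 ≠ 0 := by
    intro h
    rw [h, norm_zero] at hi0
    linarith
  have hmeas : ∀ v : EuclideanSpace ℝ (Fin d),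
      Measurable (fun g : EuclideanSpace ℝ (Fin d) => (inner ℝ v g : ℝ)) :=
    fun v => (Continuous.inner continuous_const continuous_id).measurable
  have hlaw : ∀ (v : EuclideanSpace ℝ (Fin d)), v ≠ 0 → ∀ t : ℝ,
      μ {g | t < (inner ℝ v g : ℝ)} = γ (Ioi (t / ‖v‖)) := by
    intro v hv t
    have : {g : EuclideanSpace ℝ (Fin d) | t < (inner ℝ v g : ℝ)}
        = (fun g : EuclideanSpace ℝ (Fin d) => (inner ℝ v g : ℝ)) ⁻¹' (Ioi t) := rfl
    rw [this, ← Measure.map_apply (hmeas v) measurableSet_Ioi, hμ,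
      stdGaussian_map_inner v hv, gaussian_tail_scale (norm_pos_iff.mpr hv), hγ]
  -- key chain
  have key : ∀ t : ℝ, 0 < t → γ (Ioi (t / R')) ≤ (k : ℝ≥0∞) * γ (Ioi (t / R)) := by
    intro t ht
    have hmA : MeasurableSet {g : EuclideanSpace ℝ (Fin d) | ∀ i, (inner ℝ (x i) g : ℝ) ≤ t} := by
      have : {g : EuclideanSpace ℝ (Fin d) | ∀ i, (inner ℝ (x i) g : ℝ) ≤ t}
          = ⋂ i, {g | (inner ℝ (x i) g : ℝ) ≤ t} := by ext g; simp
      rw [this]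
      exact MeasurableSet.iInter fun i => measurableSet_le (hmeas (x i)) measurable_const
    have hmy : MeasurableSet {g : EuclideanSpace ℝ (Fin d) | (inner ℝ (y i0) g : ℝ) ≤ t} :=
      measurableSet_le (hmeas (y i0)) measurable_const
    have stepA : μ {g | ∀ i, (inner ℝ (x i) g : ℝ) ≤ t}
        ≤ μ {g | (inner ℝ (y i0) g : ℝ) ≤ t} :=
      (hslepian t).trans (measure_mono (fun g hg => hg i0))
    have stepB : μ {g | t < (inner ℝ (y i0) g : ℝ)}
        ≤ μ {g | ∀ i, (inner ℝ (x i) g : ℝ) ≤ t}ᶜ := by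
      have e1 : {g : EuclideanSpace ℝ (Fin d) | t < (inner ℝ (y i0) g : ℝ)}
          = {g : EuclideanSpace ℝ (Fin d) | (inner ℝ (y i0) g : ℝ) ≤ t}ᶜ := by
        ext g; simp [not_le]
      rw [e1, measure_compl hmy (measure_ne_top μ _),
        measure_compl hmA (measure_ne_top μ _)]
      exact tsub_le_tsub_left stepA _
    have stepC : μ {g | ∀ i, (inner ℝ (x i) g : ℝ) ≤ t}ᶜ
        ≤ ∑ i, μ {g | t < (inner ℝ (x i) g : ℝ)} := by
      have e2 : {g : EuclideanSpace ℝ (Fin d) | ∀ i, (inner ℝ (x i) g : ℝ) ≤ t}ᶜ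
          = ⋃ i, {g | t < (inner ℝ (x i) g : ℝ)} := by
        ext g; simp [not_le]
      rw [e2]
      exact measure_iUnion_fintype_le _ _
    have stepD : ∀ i, μ {g | t < (inner ℝ (x i) g : ℝ)} ≤ γ (Ioi (t / R)) := by
      intro i
      by_cases hxi : x i = 0
      · have he : {g : EuclideanSpace ℝ (Fin d) | t < (inner ℝ (x i) g : ℝ)} = ∅ := by
          ext g
          simp only [hxi, inner_zero_left, Set.mem_setOf_eq, Set.mem_empty_iff_false, iff_false,
            not_lt]
          exact ht.le
        rw [he]
        simp
      · rw [hlaw (x i) hxi t]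
        apply measure_mono
        apply Ioi_subset_Ioi
        have h1 : ‖x i‖ ≤ R := hR.2 (Set.mem_range_self i)
        have h2 : 0 < ‖x i‖ := norm_pos_iff.mpr hxi
        gcongr
    calc γ (Ioi (t / R')) = μ {g | t < (inner ℝ (y i0) g : ℝ)} := by
          rw [hlaw (y i0) hyne t, hi0]
      _ ≤ ∑ i, μ {g | t < (inner ℝ (x i) g : ℝ)} := stepB.trans stepC
      _ ≤ ∑ _i : Fin k, γ (Ioi (t / R)) := Finset.sum_le_sum fun i _ => stepD i
      _ = (k : ℝ≥0∞) * γ (Ioi (t / R)) := by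
          rw [Finset.sum_const, Finset.card_univ, Fintype.card_fin, nsmul_eq_mul]
  -- choose s
  set c : ℝ := R' / R with hcdef
  have hc : 1 < c := (one_lt_div hRpos).mpr hcon
  set c0 : ℝ := (Real.sqrt (2 * π))⁻¹ with hc0
  have hc0pos : 0 < c0 := by rw [hc0]; positivity
  have hkpos : (1 : ℝ) ≤ k := by exact_mod_cast hk
  set M : ℝ := Real.log (k * Real.sqrt (2 * π)) with hM
  set M' : ℝ := max M 0 with hM'
  set ε : ℝ := c ^ 2 - 1 with hε
  have hεpos : 0 < ε := by nlinarith
  set s : ℝ := max 1 ((2 * M' + 4) / ε) with hs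
  have hs1 : 1 ≤ s := le_max_left _ _
  have hs2 : (2 * M' + 4) / ε ≤ s := le_max_right _ _
  have hspos : 0 < s := lt_of_lt_of_le one_pos hs1
  have hM'0 : 0 ≤ M' := le_max_right _ _
  have hgap : M < (ε * s ^ 2 - 2 * s - 1) / 2 := by
    have h3 : (2 * M' + 4) ≤ ε * s := (div_le_iff₀' hεpos).mp hs2
    have h4 : ε * s * s ≥ (2 * M' + 4) * s := by nlinarith
    have h5 : (2 * M' + 4) * s ≥ 2 * M' + 2 * s + 2 := by nlinarith
    have h6 : M ≤ M' := le_max_left _ _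
    nlinarith [sq_nonneg s]
  set t : ℝ := R' * s with htdef
  have ht : 0 < t := mul_pos hR'pos hspos
  have htR' : t / R' = s := by
    rw [htdef, mul_comm, mul_div_assoc, div_self (ne_of_gt hR'pos), mul_one]
  have htR : t / R = c * s := by rw [htdef, hcdef]; ring
  have hcs1 : 1 ≤ c * s := by nlinarith
  have h1 := key t ht
  rw [htR', htR] at h1
  have h2 : γ (Ioi (c * s)) ≤ ENNReal.ofReal (Real.exp (-(c * s) ^ 2 / 2)) :=
    gaussian_tail_upper hcs1
  have h3 : ENNReal.ofReal (c0 * Real.exp (-(s + 1) ^ 2 / 2)) ≤ γ (Ioi s) :=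
    gaussian_tail_lower (le_of_lt hspos)
  have h5 : (k : ℝ) * Real.exp (-(c * s) ^ 2 / 2) < c0 * Real.exp (-(s + 1) ^ 2 / 2) := by
    have hexp : (k : ℝ) * Real.sqrt (2 * π) < Real.exp ((c * s) ^ 2 / 2 - (s + 1) ^ 2 / 2) := by
      have hB : (c * s) ^ 2 / 2 - (s + 1) ^ 2 / 2 = (ε * s ^ 2 - 2 * s - 1) / 2 := by
        rw [hε]; ring
      rw [hB]
      calc (k : ℝ) * Real.sqrt (2 * π) = Real.exp M := by
            rw [hM, Real.exp_log (by positivity)]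
        _ < Real.exp ((ε * s ^ 2 - 2 * s - 1) / 2) := Real.exp_lt_exp.mpr hgap
    have hsqrtpos : 0 < Real.sqrt (2 * π) := by positivity
    have := mul_lt_mul_of_pos_right hexp (mul_pos hc0pos (Real.exp_pos (-(c * s) ^ 2 / 2)))
    calc (k : ℝ) * Real.exp (-(c * s) ^ 2 / 2)
        = ((k : ℝ) * Real.sqrt (2 * π)) * (c0 * Real.exp (-(c * s) ^ 2 / 2)) := by
          rw [hc0]; field_simp
      _ < Real.exp ((c * s) ^ 2 / 2 - (s + 1) ^ 2 / 2) * (c0 * Real.exp (-(c * s) ^ 2 / 2)) := this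
      _ = c0 * Real.exp (-(s + 1) ^ 2 / 2) := by
          rw [mul_left_comm, ← Real.exp_add]
          congr 1
          ring
  have h6 : (k : ℝ≥0∞) * ENNReal.ofReal (Real.exp (-(c * s) ^ 2 / 2))
      = ENNReal.ofReal ((k : ℝ) * Real.exp (-(c * s) ^ 2 / 2)) := by
    rw [ENNReal.ofReal_mul (by positivity)]
    congr 1
    simp
  have contra : γ (Ioi s) < γ (Ioi s) := by
    calc γ (Ioi s) ≤ (k : ℝ≥0∞) * γ (Ioi (c * s)) := h1
      _ ≤ (k : ℝ≥0∞) * ENNReal.ofReal (Real.exp (-(c * s) ^ 2 / 2)) := by gcongr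
      _ = ENNReal.ofReal ((k : ℝ) * Real.exp (-(c * s) ^ 2 / 2)) := h6
      _ < ENNReal.ofReal (c0 * Real.exp (-(s + 1) ^ 2 / 2)) :=
          (ENNReal.ofReal_lt_ofReal_iff (by positivity)).mpr h5
      _ ≤ γ (Ioi s) := h3
  exact lt_irrefl _ contra
end

section
/- The Vietoris–Rips and Čech complexes of a finite point set X ⊂ R^d satisfy Č_α(X) ⊆ V_α(X) ⊆ Č_{√2 α}(X) for all α ≥ 0, where a simplex σ belongs to Č_α(X) iff the points of σ lie in a common closed ball of radius α, and to V_α(X) iff all pairwise distances in σ are at most 2α. -/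
open Finset in
lemma jung_weak {E : Type*} [NormedAddCommGroup E] [InnerProductSpace ℝ E]
    [FiniteDimensional ℝ E] (s : Finset E) (hs : s.Nonempty) (D : ℝ) (hD : 0 ≤ D)
    (h : ∀ x ∈ s, ∀ y ∈ s, dist x y ≤ D) :
    ∃ c : E, ∀ x ∈ s, dist x c ≤ D / Real.sqrt 2 := by
  set f : E → ℝ := fun c => s.sup' hs (fun x => dist x c) with hf
  have hfc : Continuous f := by
    rw [continuous_iff_continuousAt]
    intro c
    exact ContinuousAt.finset_sup'_apply (f := fun i c => dist i c) hs
      fun i _ => (continuous_const.dist continuous_id).continuousAt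
  obtain ⟨x₀, hx₀⟩ := id hs
  have hfle : ∀ (c' : E), ∀ x ∈ s, dist x c' ≤ f c' :=
    fun c' x hx => Finset.le_sup' (fun z => dist z c') hx
  -- minimize f over a compact ball
  obtain ⟨c, hcK, hcmin⟩ := (isCompact_closedBall x₀ (f x₀)).exists_isMinOn
    ⟨x₀, by simp [Metric.mem_closedBall, dist_self]; exact dist_nonneg.trans (hfle x₀ x₀ hx₀)⟩ hfc.continuousOn
  have hglobal : ∀ c' : E, f c ≤ f c' := by
    intro c'
    by_cases hc' : c' ∈ Metric.closedBall x₀ (f x₀)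
    · exact hcmin hc'
    · have h1 : f x₀ < dist x₀ c' := by
        rw [Metric.mem_closedBall, dist_comm] at hc'; linarith [not_le.mp hc']
      have h2 : dist x₀ c' ≤ f c' := hfle c' x₀ hx₀
      have h3 : f c ≤ f x₀ := hcmin (by simp [Metric.mem_closedBall, dist_self]; exact dist_nonneg.trans (hfle x₀ x₀ hx₀))
      linarith
  set r : ℝ := f c with hr
  have hrle : ∀ x ∈ s, dist x c ≤ r := fun x hx => hfle c x hx
  rcases le_or_gt r (D / Real.sqrt 2) with hcase | hcase
  · exact ⟨c, fun x hx => (hrle x hx).trans hcase⟩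
  exfalso
  have hr0 : 0 < r := lt_of_le_of_lt (div_nonneg hD (Real.sqrt_nonneg 2)) hcase
  obtain ⟨x, hxs, hxr⟩ := Finset.exists_mem_eq_sup' hs (fun x => dist x c)
  have hxr : dist x c = r := hxr.symm
  -- there is a farthest point y with ⟪x - c, y - c⟫ ≤ 0
  by_cases hy : ∃ y ∈ s, dist y c = r ∧ inner ℝ (x - c) (y - c) ≤ (0 : ℝ)
  · obtain ⟨y, hys, hyr, hyi⟩ := hy
    have hxy : dist x y ≤ D := h x hxs y hys
    have : dist x y ^ 2 ≥ 2 * r ^ 2 := by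
      have e : dist x y ^ 2 = dist x c ^ 2 + dist y c ^ 2 - 2 * inner ℝ (x - c) (y - c) := by
        rw [dist_eq_norm, dist_eq_norm, dist_eq_norm]
        have : x - y = (x - c) - (y - c) := by abel
        rw [this, @norm_sub_sq_real]
        ring
      rw [e, ← hxr, hyr]
      nlinarith
    have hD2 : D ^ 2 ≥ 2 * r ^ 2 := le_trans this (by nlinarith [dist_nonneg (x := x) (y := y)])
    have : r ≤ D / Real.sqrt 2 := by
      rw [le_div_iff₀ (Real.sqrt_pos.mpr two_pos)]
      nlinarith [Real.sq_sqrt (le_of_lt two_pos), Real.sqrt_nonneg 2, hr0]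
    linarith
  -- otherwise we can move c and decrease the max distance
  push_neg at hy
  have hxcn : ‖x - c‖ = r := by rw [← hxr, dist_eq_norm]
  -- threshold for each y
  set g : E → ℝ := fun y => if (0:ℝ) < inner ℝ (x - c) (y - c) then
      (inner ℝ (x - c) (y - c) : ℝ) / r ^ 2 else (r ^ 2 - dist y c ^ 2) / (6 * r ^ 2) with hg
  have hgpos : ∀ y ∈ s, 0 < g y := by
    intro y hys
    by_cases hp : (0:ℝ) < inner ℝ (x - c) (y - c)
    · simp only [hg, if_pos hp]; positivity
    · have hlt : dist y c < r := by
        rcases lt_or_eq_of_le (hrle y hys) with h' | h'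
        · exact h'
        · exact absurd (le_of_not_gt hp) (not_le.mpr (hy y hys h'))
      simp only [hg, if_neg hp]
      have : dist y c ^ 2 < r ^ 2 := by nlinarith [dist_nonneg (x := y) (y := c)]
      exact div_pos (by linarith) (by positivity)
  obtain ⟨t0, ht0s, ht0⟩ := Finset.exists_mem_eq_inf' hs g
  set t : ℝ := min (g t0) 1 with ht
  have htpos : 0 < t := lt_min (hgpos t0 ht0s) one_pos
  have htle : ∀ y ∈ s, t ≤ g y := fun y hys =>
    (min_le_left _ _).trans (ht0 ▸ Finset.inf'_le g hys)
  have ht1 : t ≤ 1 := min_le_right _ _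
  set c' : E := c + t • (x - c) with hc'
  have key : ∀ y ∈ s, dist y c' < r := by
    intro y hys
    have hyc' : y - c' = (y - c) - t • (x - c) := by simp [hc']; abel
    have e : dist y c' ^ 2 = dist y c ^ 2 - 2 * t * inner ℝ (x - c) (y - c) + t ^ 2 * r ^ 2 := by
      have h1 : ‖y - c - t • (x - c)‖ ^ 2
          = ‖y - c‖ ^ 2 - 2 * inner ℝ (y - c) (t • (x - c)) + ‖t • (x - c)‖ ^ 2 :=
        norm_sub_sq_real _ _
      have h2 : (inner ℝ (y - c) (t • (x - c)) : ℝ) = t * inner ℝ (x - c) (y - c) := by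
        rw [real_inner_smul_right, real_inner_comm]
      have h3 : ‖t • (x - c)‖ = t * r := by
        rw [norm_smul, hxcn, Real.norm_eq_abs, abs_of_pos htpos]
      rw [dist_eq_norm, hyc', h1, h2, h3, dist_eq_norm]
      ring
    have hq : dist y c' ^ 2 < r ^ 2 := by
      by_cases hp : (0:ℝ) < inner ℝ (x - c) (y - c)
      · have hgt : t ≤ (inner ℝ (x - c) (y - c) : ℝ) / r ^ 2 := by
          have := htle y hys; simpa [hg, if_pos hp] using this
        have h1 : t * r ^ 2 ≤ inner ℝ (x - c) (y - c) := by
          rw [← le_div_iff₀ (by positivity)] ; exact hgt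
        have := hrle y hys
        nlinarith [dist_nonneg (x := y) (y := c)]
      · have hlt : dist y c < r := by
          rcases lt_or_eq_of_le (hrle y hys) with h' | h'
          · exact h'
          · exact absurd (le_of_not_gt hp) (not_le.mpr (hy y hys h'))
        have hgt : t ≤ (r ^ 2 - dist y c ^ 2) / (6 * r ^ 2) := by
          have := htle y hys; simpa [hg, if_neg hp] using this
        have h1 : t * (6 * r ^ 2) ≤ r ^ 2 - dist y c ^ 2 := by
          rw [← le_div_iff₀ (by positivity)]; exact hgt
        have hp' : inner ℝ (x - c) (y - c) ≤ (0:ℝ) := le_of_not_gt hp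
        have hcs : |(inner ℝ (x - c) (y - c) : ℝ)| ≤ ‖x - c‖ * ‖y - c‖ :=
          abs_real_inner_le_norm _ _
        have hyn : ‖y - c‖ = dist y c := (dist_eq_norm y c).symm
        have hpl : -(r * r) ≤ (inner ℝ (x - c) (y - c) : ℝ) := by
          rw [hxcn, hyn] at hcs
          have := neg_abs_le (inner ℝ (x - c) (y - c) : ℝ)
          nlinarith [dist_nonneg (x := y) (y := c)]
        nlinarith [dist_nonneg (x := y) (y := c)]
    have h0 : 0 ≤ dist y c' := dist_nonneg
    nlinarith
  obtain ⟨z, hzs, hz⟩ := Finset.exists_mem_eq_sup' hs (fun y => dist y c')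
  have : f c' < r := by
    have : f c' = dist z c' := hz
    rw [this]; exact key z hzs
  linarith [hglobal c']

/-- Čech–Vietoris-Rips interleaving: Č_α(X) ⊆ V_α(X) ⊆ Č_{√2·α}(X).  A simplex σ is
in Č_α(X) iff σ lies in a common closed ball of radius α, and in V_α(X) iff all
pairwise distances in σ are at most 2α. -/
theorem stmt_17 {d : ℕ} (X : Set (EuclideanSpace ℝ (Fin d))) (hX : X.Finite)
    (α : ℝ) (hα : 0 ≤ α) :
    ∀ σ ⊆ X,
      ((∃ c : EuclideanSpace ℝ (Fin d), ∀ x ∈ σ, dist x c ≤ α) →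
        ∀ x ∈ σ, ∀ y ∈ σ, dist x y ≤ 2 * α) ∧
      ((∀ x ∈ σ, ∀ y ∈ σ, dist x y ≤ 2 * α) →
        ∃ c : EuclideanSpace ℝ (Fin d), ∀ x ∈ σ, dist x c ≤ Real.sqrt 2 * α) := by
  intro σ hσ
  constructor
  · rintro ⟨c, hc⟩ x hx y hy
    calc dist x y ≤ dist x c + dist c y := dist_triangle _ _ _
      _ ≤ α + α := add_le_add (hc x hx) (by rw [dist_comm]; exact hc y hy)
      _ = 2 * α := by ring
  · intro hpair
    have hσf : σ.Finite := hX.subset hσ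
    rcases σ.eq_empty_or_nonempty with rfl | ⟨p, hp⟩
    · exact ⟨0, by simp⟩
    have hsne : hσf.toFinset.Nonempty := ⟨p, hσf.mem_toFinset.mpr hp⟩
    obtain ⟨c, hc⟩ := jung_weak hσf.toFinset hsne (2 * α) (by linarith)
      (fun x hx y hy => hpair x (hσf.mem_toFinset.mp hx) y (hσf.mem_toFinset.mp hy))
    refine ⟨c, fun x hx => (hc x (hσf.mem_toFinset.mpr hx)).trans_eq ?_⟩
    have h2 : Real.sqrt 2 * Real.sqrt 2 = 2 := Real.mul_self_sqrt (by norm_num)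
    have hs2 : (0:ℝ) < Real.sqrt 2 := by positivity
    rw [div_eq_iff hs2.ne']
    nlinarith
end

section
/- The power distance version of the enclosing ball stability: if f preserves Euclidean distances on S up to factors (1±ε) and preserves weights (w(f(x)) = w(x)), then the weighted smallest enclosing ball radius ρ_w(S) = min_p max_{x∈S} √(‖p−x‖² + w(x)²) satisfies (1−ε)ρ_w(S) ≤ ρ_w(f(S)) ≤ (1+ε)ρ_w(S). -/
open Finset

section PwAux

variable {E : Type*} [NormedAddCommGroup E] [InnerProductSpace ℝ E]
variable {ι : Type*} [Fintype ι] [DecidableEq ι]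

/-- The dual objective of the weighted smallest enclosing ball problem. -/
noncomputable def pwG (u : ι → E) (ω : ι → ℝ) (l : ι → ℝ) : ℝ :=
  ∑ i, l i * (‖u i‖ ^ 2 + ω i ^ 2) - ‖∑ i, l i • u i‖ ^ 2

lemma pwG_weak (u : ι → E) (ω l : ι → ℝ) (hl : l ∈ stdSimplex ℝ ι) (p : E) :
    pwG u ω l ≤ ∑ i, l i * (dist p (u i) ^ 2 + ω i ^ 2) := by
  set b := ∑ i, l i • u i with hbdef
  have hb : (inner ℝ p b : ℝ) = ∑ i, l i * inner ℝ p (u i) := by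
    rw [hbdef, inner_sum]
    exact Finset.sum_congr rfl fun i _ => real_inner_smul_right p (u i) (l i)
  have hsum : ∑ i, l i * (dist p (u i) ^ 2 + ω i ^ 2)
      = ∑ i, (l i * (‖u i‖ ^ 2 + ω i ^ 2) + ‖p‖ ^ 2 * l i - 2 * (l i * inner ℝ p (u i))) := by
    refine Finset.sum_congr rfl fun i _ => ?_
    rw [dist_eq_norm, norm_sub_sq_real]
    ring
  rw [hsum, Finset.sum_sub_distrib, Finset.sum_add_distrib, ← Finset.mul_sum, hl.2,
    ← Finset.mul_sum, ← hb]
  have hpb : ‖p - b‖ ^ 2 = ‖p‖ ^ 2 - 2 * inner ℝ p b + ‖b‖ ^ 2 := norm_sub_sq_real p b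
  have h0 := sq_nonneg ‖p - b‖
  unfold pwG
  rw [← hbdef]
  nlinarith [h0, hpb]

lemma pwG_eq (u : ι → E) (ω l : ι → ℝ) (hl : ∑ i, l i = 1) :
    pwG u ω l = (∑ i, ∑ j, l i * l j * ‖u i - u j‖ ^ 2) / 2 + ∑ i, l i * ω i ^ 2 := by
  set b := ∑ i, l i • u i with hbdef
  have hbb : ‖b‖ ^ 2 = ∑ i, ∑ j, l i * l j * (inner ℝ (u i) (u j) : ℝ) := by
    rw [← real_inner_self_eq_norm_sq, hbdef, sum_inner]
    refine Finset.sum_congr rfl fun i _ => ?_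
    rw [real_inner_smul_left, inner_sum, Finset.mul_sum]
    refine Finset.sum_congr rfl fun j _ => ?_
    rw [real_inner_smul_right]; ring
  have hterm : ∀ i j, l i * l j * ‖u i - u j‖ ^ 2
      = l i * l j * ‖u i‖ ^ 2 + l i * l j * ‖u j‖ ^ 2
        - 2 * (l i * l j * (inner ℝ (u i) (u j) : ℝ)) := by
    intro i j; rw [norm_sub_sq_real]; ring
  have e1 : ∀ i : ι, ∑ j, l i * l j * ‖u i‖ ^ 2 = l i * ‖u i‖ ^ 2 := by
    intro i
    calc ∑ j, l i * l j * ‖u i‖ ^ 2 = (l i * ‖u i‖ ^ 2) * ∑ j, l j := by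
          rw [Finset.mul_sum]; exact Finset.sum_congr rfl fun j _ => by ring
      _ = l i * ‖u i‖ ^ 2 := by rw [hl, mul_one]
  have e2 : ∀ i : ι, ∑ j, l i * l j * ‖u j‖ ^ 2 = l i * (∑ j, l j * ‖u j‖ ^ 2) := by
    intro i; rw [Finset.mul_sum]; exact Finset.sum_congr rfl fun j _ => by ring
  have h1 : ∑ i, ∑ j, l i * l j * ‖u i - u j‖ ^ 2
      = 2 * (∑ i, l i * ‖u i‖ ^ 2) - 2 * ‖b‖ ^ 2 := by
    simp_rw [hterm, Finset.sum_sub_distrib, Finset.sum_add_distrib, e1, e2,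
      ← Finset.mul_sum, hbb]
    rw [← Finset.sum_mul, hl, one_mul]
    ring
  have h2 : ∑ i, l i * (‖u i‖ ^ 2 + ω i ^ 2)
      = ∑ i, l i * ‖u i‖ ^ 2 + ∑ i, l i * ω i ^ 2 := by
    rw [← Finset.sum_add_distrib]
    exact Finset.sum_congr rfl fun i _ => by ring
  unfold pwG
  rw [← hbdef, h1, h2]
  ring

lemma pwG_nonneg (u : ι → E) (ω l : ι → ℝ) (hl : l ∈ stdSimplex ℝ ι) :
    0 ≤ pwG u ω l := by
  rw [pwG_eq u ω l hl.2]
  have h1 : 0 ≤ ∑ i, ∑ j, l i * l j * ‖u i - u j‖ ^ 2 :=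
    Finset.sum_nonneg fun i _ => Finset.sum_nonneg fun j _ =>
      mul_nonneg (mul_nonneg (hl.1 i) (hl.1 j)) (sq_nonneg _)
  have h2 : 0 ≤ ∑ i, l i * ω i ^ 2 :=
    Finset.sum_nonneg fun i _ => mul_nonneg (hl.1 i) (sq_nonneg _)
  linarith

lemma pwG_strong (u : ι → E) (ω : ι → ℝ) (l : ι → ℝ) (hl : l ∈ stdSimplex ℝ ι)
    (hmax : ∀ m ∈ stdSimplex ℝ ι, pwG u ω m ≤ pwG u ω l) (i : ι) :
    ‖(∑ j, l j • u j) - u i‖ ^ 2 + ω i ^ 2 ≤ pwG u ω l := by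
  set b := ∑ j, l j • u j with hbdef
  set v := u i with hvdef
  set c := ∑ j, l j * (‖u j‖ ^ 2 + ω j ^ 2) with hcdef
  have key : ∀ t : ℝ, 0 < t → t ≤ 1 →
      (‖b - v‖ ^ 2 + ω i ^ 2 - pwG u ω l) ≤ t * ‖v - b‖ ^ 2 := by
    intro t ht0 ht1
    set mt : ι → ℝ := fun j => (1 - t) * l j + t * (if i = j then 1 else 0) with hmt
    have hmem : mt ∈ stdSimplex ℝ ι := by
      constructor
      · intro j
        have := hl.1 j
        by_cases h : i = j <;> simp [hmt, h] <;> nlinarith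
      · rw [hmt]
        simp only
        rw [Finset.sum_add_distrib, ← Finset.mul_sum, ← Finset.mul_sum, hl.2,
          Finset.sum_ite_eq Finset.univ i (fun _ => (1 : ℝ))]
        simp
    have hG := hmax mt hmem
    have hsum1 : ∑ j, mt j * (‖u j‖ ^ 2 + ω j ^ 2)
        = (1 - t) * c + t * (‖v‖ ^ 2 + ω i ^ 2) := by
      rw [hcdef, Finset.mul_sum]
      rw [show ∑ j, mt j * (‖u j‖ ^ 2 + ω j ^ 2)
          = ∑ j, ((1 - t) * (l j * (‖u j‖ ^ 2 + ω j ^ 2))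
              + (if i = j then t * (‖u j‖ ^ 2 + ω j ^ 2) else 0)) from
        Finset.sum_congr rfl fun j _ => by by_cases h : i = j <;> simp [hmt, h] <;> ring]
      rw [Finset.sum_add_distrib, Finset.sum_ite_eq Finset.univ i
        (fun j => t * (‖u j‖ ^ 2 + ω j ^ 2))]
      simp [hvdef]
    have hbary : ∑ j, mt j • u j = (1 - t) • b + t • v := by
      rw [hbdef, Finset.smul_sum]
      rw [show ∑ j, mt j • u j
          = ∑ j, ((1 - t) • (l j • u j) + (if i = j then t • u j else 0)) from
        Finset.sum_congr rfl fun j _ => by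
          by_cases h : i = j <;> simp [hmt, h, add_smul, smul_smul]]
      rw [Finset.sum_add_distrib, Finset.sum_ite_eq Finset.univ i (fun j => t • u j)]
      simp [hvdef]
    have hnorm : ‖(1 - t) • b + t • v‖ ^ 2
        = (1 - t) ^ 2 * ‖b‖ ^ 2 + 2 * ((1 - t) * t * inner ℝ b v) + t ^ 2 * ‖v‖ ^ 2 := by
      rw [norm_add_sq_real, norm_smul, norm_smul, real_inner_smul_left, real_inner_smul_right,
        Real.norm_eq_abs, Real.norm_eq_abs, mul_pow, mul_pow, sq_abs, sq_abs]
      ring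
    have hGmt : pwG u ω mt = pwG u ω l
        + t * (‖v‖ ^ 2 + ω i ^ 2 - c - 2 * inner ℝ b v + 2 * ‖b‖ ^ 2)
        - t ^ 2 * ‖v - b‖ ^ 2 := by
      unfold pwG
      rw [← hcdef, ← hbdef, hsum1, hbary, hnorm, norm_sub_sq_real]
      rw [real_inner_comm v b]
      ring
    have hexp : ‖b - v‖ ^ 2 = ‖b‖ ^ 2 - 2 * inner ℝ b v + ‖v‖ ^ 2 := norm_sub_sq_real b v
    have hpwl : pwG u ω l = c - ‖b‖ ^ 2 := by unfold pwG; rw [← hcdef, ← hbdef]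
    nlinarith [hG, hGmt, hexp, hpwl, sq_nonneg ‖v - b‖, ht0]
  set A := ‖b - v‖ ^ 2 + ω i ^ 2 - pwG u ω l with hA
  set C := ‖v - b‖ ^ 2 with hC
  have hC0 : 0 ≤ C := sq_nonneg _
  by_contra hcon
  push_neg at hcon
  have hA0 : 0 < A := by rw [hA]; linarith
  have ht : 0 < min 1 (A / (2 * (C + 1))) := by
    apply lt_min one_pos
    positivity
  have h2 := key _ ht (min_le_left _ _)
  have hle : min 1 (A / (2 * (C + 1))) * C ≤ A / 2 := by
    have h3 : min 1 (A / (2 * (C + 1))) ≤ A / (2 * (C + 1)) := min_le_right _ _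
    have h4 : A / (2 * (C + 1)) * C ≤ A / 2 := by
      rw [div_mul_eq_mul_div, div_le_div_iff₀ (by positivity) (by norm_num)]
      nlinarith
    nlinarith
  linarith

lemma pwG_exists_max (u : ι → E) (ω : ι → ℝ) [Nonempty ι] :
    ∃ l ∈ stdSimplex ℝ ι, ∀ m ∈ stdSimplex ℝ ι, pwG u ω m ≤ pwG u ω l := by
  have hcont : Continuous (pwG u ω) := by
    unfold pwG
    fun_prop
  obtain ⟨l, hl, hmax⟩ := (isCompact_stdSimplex ℝ ι).exists_isMaxOn
    ⟨_, ite_eq_mem_stdSimplex ℝ (Classical.arbitrary ι)⟩ hcont.continuousOn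
  exact ⟨l, hl, fun mm hm => hmax hm⟩

lemma pwG_distort {F : Type*} [NormedAddCommGroup F] [InnerProductSpace ℝ F]
    (u : ι → E) (v : ι → F) (ω l : ι → ℝ) (hl : l ∈ stdSimplex ℝ ι)
    {ε : ℝ} (hε0 : 0 ≤ ε) (hε1 : ε ≤ 1)
    (h : ∀ i j, (1 - ε) * ‖u i - u j‖ ≤ ‖v i - v j‖ ∧ ‖v i - v j‖ ≤ (1 + ε) * ‖u i - u j‖) :
    (1 - ε) ^ 2 * pwG u ω l ≤ pwG v ω l ∧ pwG v ω l ≤ (1 + ε) ^ 2 * pwG u ω l := by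
  rw [pwG_eq u ω l hl.2, pwG_eq v ω l hl.2]
  have hW : 0 ≤ ∑ i, l i * ω i ^ 2 :=
    Finset.sum_nonneg fun i _ => mul_nonneg (hl.1 i) (sq_nonneg _)
  have hDu : 0 ≤ ∑ i, ∑ j, l i * l j * ‖u i - u j‖ ^ 2 :=
    Finset.sum_nonneg fun i _ => Finset.sum_nonneg fun j _ =>
      mul_nonneg (mul_nonneg (hl.1 i) (hl.1 j)) (sq_nonneg _)
  have hup : ∑ i, ∑ j, l i * l j * ‖v i - v j‖ ^ 2
      ≤ (1 + ε) ^ 2 * ∑ i, ∑ j, l i * l j * ‖u i - u j‖ ^ 2 := by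
    rw [Finset.mul_sum]
    refine Finset.sum_le_sum fun i _ => ?_
    rw [Finset.mul_sum]
    refine Finset.sum_le_sum fun j _ => ?_
    have h1 := (h i j).2
    have h2 : ‖v i - v j‖ ^ 2 ≤ (1 + ε) ^ 2 * ‖u i - u j‖ ^ 2 := by
      nlinarith [norm_nonneg (v i - v j), norm_nonneg (u i - u j)]
    nlinarith [mul_nonneg (hl.1 i) (hl.1 j)]
  have hlo : (1 - ε) ^ 2 * ∑ i, ∑ j, l i * l j * ‖u i - u j‖ ^ 2
      ≤ ∑ i, ∑ j, l i * l j * ‖v i - v j‖ ^ 2 := by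
    rw [Finset.mul_sum]
    refine Finset.sum_le_sum fun i _ => ?_
    rw [Finset.mul_sum]
    refine Finset.sum_le_sum fun j _ => ?_
    have h1 := (h i j).1
    have h2 : (1 - ε) ^ 2 * ‖u i - u j‖ ^ 2 ≤ ‖v i - v j‖ ^ 2 := by
      nlinarith [norm_nonneg (v i - v j), norm_nonneg (u i - u j),
        mul_nonneg (by linarith : (0:ℝ) ≤ 1 - ε) (norm_nonneg (u i - u j))]
    nlinarith [mul_nonneg (hl.1 i) (hl.1 j)]
  have hfac1 : (1 - ε) ^ 2 ≤ 1 := by nlinarith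
  have hfac2 : 1 ≤ (1 + ε) ^ 2 := by nlinarith
  have hw1 : (1 - ε) ^ 2 * ∑ i, l i * ω i ^ 2 ≤ ∑ i, l i * ω i ^ 2 := by nlinarith
  have hw2 : ∑ i, l i * ω i ^ 2 ≤ (1 + ε) ^ 2 * ∑ i, l i * ω i ^ 2 := by nlinarith
  constructor
  · nlinarith
  · nlinarith

end PwAux

section SupAux

lemma le_biSup_fin {α : Type*} {S : Set α} (hS : S.Finite) (g : α → ℝ) {x : α} (hx : x ∈ S) :
    g x ≤ ⨆ y ∈ S, g y := by
  have hbdd : BddAbove (Set.range fun y => ⨆ _ : y ∈ S, g y) := by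
    apply Set.Finite.bddAbove
    apply Set.Finite.subset ((hS.image g).insert 0)
    rintro _ ⟨y, rfl⟩
    dsimp only
    by_cases hy : y ∈ S
    · rw [ciSup_pos (f := fun _ : y ∈ S => g y) hy]
      exact Set.mem_insert_iff.mpr (Or.inr ⟨y, hy, rfl⟩)
    · haveI : IsEmpty (y ∈ S) := ⟨hy⟩
      rw [Real.iSup_of_isEmpty]
      exact Set.mem_insert_iff.mpr (Or.inl rfl)
  have h1 : (⨆ _ : x ∈ S, g x) ≤ ⨆ y ∈ S, g y := le_ciSup hbdd x
  rwa [ciSup_pos (f := fun _ : x ∈ S => g x) hx] at h1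

lemma biSup_le_fin {α : Type*} {S : Set α} (g : α → ℝ) {M : ℝ} (hM : 0 ≤ M)
    (h : ∀ x ∈ S, g x ≤ M) : (⨆ y ∈ S, g y) ≤ M :=
  Real.iSup_le (fun y => Real.iSup_le (fun hy => h y hy) hM) hM

lemma biSup_nonneg_fin {α : Type*} {S : Set α} (g : α → ℝ) (hg : ∀ x, 0 ≤ g x) :
    0 ≤ ⨆ y ∈ S, g y :=
  Real.iSup_nonneg fun y => Real.iSup_nonneg fun _ => hg y

end SupAux

/-- The weighted (power-distance) smallest enclosing ball radius of a finite set S. -/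
noncomputable def powerRadius {d : ℕ} (S : Set (EuclideanSpace ℝ (Fin d)))
    (w : EuclideanSpace ℝ (Fin d) → ℝ) : ℝ :=
  ⨅ p : EuclideanSpace ℝ (Fin d), ⨆ x ∈ S, Real.sqrt (dist p x ^ 2 + w x ^ 2)

lemma powerRadius_empty {d : ℕ} (w : EuclideanSpace ℝ (Fin d) → ℝ) :
    powerRadius ∅ w = 0 := by
  unfold powerRadius
  have h : ∀ p : EuclideanSpace ℝ (Fin d),
      (⨆ x ∈ (∅ : Set (EuclideanSpace ℝ (Fin d))), Real.sqrt (dist p x ^ 2 + w x ^ 2)) = 0 := by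
    intro p
    have : ∀ x : EuclideanSpace ℝ (Fin d),
        (⨆ _ : x ∈ (∅ : Set (EuclideanSpace ℝ (Fin d))), Real.sqrt (dist p x ^ 2 + w x ^ 2)) = 0 := by
      intro x
      haveI : IsEmpty (x ∈ (∅ : Set (EuclideanSpace ℝ (Fin d)))) := ⟨fun h => h⟩
      exact Real.iSup_of_isEmpty _
    simp_rw [this]
    exact Real.iSup_const_zero
  simp_rw [h]
  exact ciInf_const

lemma powerRadius_nonneg {d : ℕ} (S : Set (EuclideanSpace ℝ (Fin d)))
    (w : EuclideanSpace ℝ (Fin d) → ℝ) : 0 ≤ powerRadius S w :=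
  le_ciInf fun _ => biSup_nonneg_fin _ fun _ => Real.sqrt_nonneg _

lemma powerRadius_le {d : ℕ} (S : Set (EuclideanSpace ℝ (Fin d)))
    (w : EuclideanSpace ℝ (Fin d) → ℝ) (p : EuclideanSpace ℝ (Fin d)) :
    powerRadius S w ≤ ⨆ x ∈ S, Real.sqrt (dist p x ^ 2 + w x ^ 2) :=
  ciInf_le ⟨0, by
    rintro _ ⟨q, rfl⟩
    exact biSup_nonneg_fin _ fun _ => Real.sqrt_nonneg _⟩ p

/-- Stability of the weighted smallest enclosing ball radius under maps preserving
distances up to (1±ε) and preserving weights. -/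
theorem stmt_19 {d m : ℕ} (S : Set (EuclideanSpace ℝ (Fin d))) (hS : S.Finite)
    (ε : ℝ) (hε0 : 0 ≤ ε) (hε1 : ε < 1)
    (w : EuclideanSpace ℝ (Fin d) → ℝ) (w' : EuclideanSpace ℝ (Fin m) → ℝ)
    (hw : ∀ x ∈ S, 0 ≤ w x)
    (f : EuclideanSpace ℝ (Fin d) → EuclideanSpace ℝ (Fin m))
    (hf : ∀ x ∈ S, ∀ y ∈ S,
      (1 - ε) * ‖x - y‖ ≤ ‖f x - f y‖ ∧ ‖f x - f y‖ ≤ (1 + ε) * ‖x - y‖)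
    (hww : ∀ x ∈ S, w' (f x) = w x) :
    (1 - ε) * powerRadius S w ≤ powerRadius (f '' S) w' ∧
      powerRadius (f '' S) w' ≤ (1 + ε) * powerRadius S w := by
  rcases S.eq_empty_or_nonempty with rfl | hne
  · rw [Set.image_empty, powerRadius_empty, powerRadius_empty]
    norm_num
  · haveI := hS.fintype
    haveI : Nonempty ↥S := hne.to_subtype
    haveI : DecidableEq ↥S := Classical.decEq _
    set u : ↥S → EuclideanSpace ℝ (Fin d) := fun i => (i : EuclideanSpace ℝ (Fin d)) with hu
    set v : ↥S → EuclideanSpace ℝ (Fin m) := fun i => f i with hv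
    set ω : ↥S → ℝ := fun i => w i with hω
    have hdist : ∀ i j : ↥S, (1 - ε) * ‖u i - u j‖ ≤ ‖v i - v j‖ ∧
        ‖v i - v j‖ ≤ (1 + ε) * ‖u i - u j‖ := fun i j => hf i i.2 j j.2
    have hρ0 : 0 ≤ powerRadius S w := powerRadius_nonneg S w
    have hρ'0 : 0 ≤ powerRadius (f '' S) w' := powerRadius_nonneg _ w'
    -- weak duality for S
    have weakS : ∀ l ∈ stdSimplex ℝ ↥S, pwG u ω l ≤ (powerRadius S w) ^ 2 := by
      intro l hl
      have h1 : ∀ p : EuclideanSpace ℝ (Fin d),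
          Real.sqrt (pwG u ω l) ≤ ⨆ x ∈ S, Real.sqrt (dist p x ^ 2 + w x ^ 2) := by
        intro p
        set Rp := ⨆ x ∈ S, Real.sqrt (dist p x ^ 2 + w x ^ 2) with hRp
        have hRp0 : 0 ≤ Rp := biSup_nonneg_fin _ fun _ => Real.sqrt_nonneg _
        have h2 : pwG u ω l ≤ ∑ i, l i * (dist p (u i) ^ 2 + ω i ^ 2) :=
          pwG_weak u ω l hl p
        have h3 : ∑ i, l i * (dist p (u i) ^ 2 + ω i ^ 2) ≤ ∑ i, l i * Rp ^ 2 := by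
          refine Finset.sum_le_sum fun i _ => mul_le_mul_of_nonneg_left ?_ (hl.1 i)
          have h4 : Real.sqrt (dist p (u i) ^ 2 + ω i ^ 2) ≤ Rp :=
            le_biSup_fin hS (fun x => Real.sqrt (dist p x ^ 2 + w x ^ 2)) i.2
          have h5 : 0 ≤ dist p (u i) ^ 2 + ω i ^ 2 := by positivity
          calc dist p (u i) ^ 2 + ω i ^ 2
              = Real.sqrt (dist p (u i) ^ 2 + ω i ^ 2) ^ 2 := (Real.sq_sqrt h5).symm
            _ ≤ Rp ^ 2 := pow_le_pow_left₀ (Real.sqrt_nonneg _) h4 2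
        have h6 : ∑ i, l i * Rp ^ 2 = Rp ^ 2 := by
          rw [← Finset.sum_mul, hl.2, one_mul]
        have h7 : pwG u ω l ≤ Rp ^ 2 := by linarith
        calc Real.sqrt (pwG u ω l) ≤ Real.sqrt (Rp ^ 2) := Real.sqrt_le_sqrt h7
          _ = Rp := Real.sqrt_sq hRp0
      have h5 : Real.sqrt (pwG u ω l) ≤ powerRadius S w := le_ciInf h1
      calc pwG u ω l = Real.sqrt (pwG u ω l) ^ 2 := (Real.sq_sqrt (pwG_nonneg u ω l hl)).symm
        _ ≤ (powerRadius S w) ^ 2 := pow_le_pow_left₀ (Real.sqrt_nonneg _) h5 2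
    -- weak duality for the image
    have weakF : ∀ l ∈ stdSimplex ℝ ↥S, pwG v ω l ≤ (powerRadius (f '' S) w') ^ 2 := by
      intro l hl
      have h1 : ∀ q : EuclideanSpace ℝ (Fin m),
          Real.sqrt (pwG v ω l) ≤ ⨆ z ∈ f '' S, Real.sqrt (dist q z ^ 2 + w' z ^ 2) := by
        intro q
        set Rq := ⨆ z ∈ f '' S, Real.sqrt (dist q z ^ 2 + w' z ^ 2) with hRq
        have hRq0 : 0 ≤ Rq := biSup_nonneg_fin _ fun _ => Real.sqrt_nonneg _
        have h2 : pwG v ω l ≤ ∑ i, l i * (dist q (v i) ^ 2 + ω i ^ 2) :=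
          pwG_weak v ω l hl q
        have h3 : ∑ i, l i * (dist q (v i) ^ 2 + ω i ^ 2) ≤ ∑ i, l i * Rq ^ 2 := by
          refine Finset.sum_le_sum fun i _ => mul_le_mul_of_nonneg_left ?_ (hl.1 i)
          have hmem : v i ∈ f '' S := ⟨u i, i.2, rfl⟩
          have hwi : w' (v i) = ω i := hww (u i) i.2
          have h4' : Real.sqrt (dist q (v i) ^ 2 + w' (v i) ^ 2) ≤ Rq :=
            le_biSup_fin (hS.image f) (fun z => Real.sqrt (dist q z ^ 2 + w' z ^ 2)) hmem
          have h4 : Real.sqrt (dist q (v i) ^ 2 + ω i ^ 2) ≤ Rq := by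
            rw [← hwi]; exact h4'
          have h5 : 0 ≤ dist q (v i) ^ 2 + ω i ^ 2 := by positivity
          calc dist q (v i) ^ 2 + ω i ^ 2
              = Real.sqrt (dist q (v i) ^ 2 + ω i ^ 2) ^ 2 := (Real.sq_sqrt h5).symm
            _ ≤ Rq ^ 2 := pow_le_pow_left₀ (Real.sqrt_nonneg _) h4 2
        have h6 : ∑ i, l i * Rq ^ 2 = Rq ^ 2 := by
          rw [← Finset.sum_mul, hl.2, one_mul]
        have h7 : pwG v ω l ≤ Rq ^ 2 := by linarith
        calc Real.sqrt (pwG v ω l) ≤ Real.sqrt (Rq ^ 2) := Real.sqrt_le_sqrt h7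
          _ = Rq := Real.sqrt_sq hRq0
      have h5 : Real.sqrt (pwG v ω l) ≤ powerRadius (f '' S) w' := le_ciInf h1
      calc pwG v ω l = Real.sqrt (pwG v ω l) ^ 2 := (Real.sq_sqrt (pwG_nonneg v ω l hl)).symm
        _ ≤ (powerRadius (f '' S) w') ^ 2 := pow_le_pow_left₀ (Real.sqrt_nonneg _) h5 2
    obtain ⟨lS, hlS, hmaxS⟩ := pwG_exists_max u ω
    obtain ⟨lF, hlF, hmaxF⟩ := pwG_exists_max v ω
    constructor
    · -- lower bound : (1-ε) ρ ≤ ρ'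
      have hro : powerRadius S w ≤ powerRadius (f '' S) w' / (1 - ε) := by
        have key : ∀ x ∈ S, Real.sqrt (dist (∑ j, lS j • u j) x ^ 2 + w x ^ 2)
            ≤ powerRadius (f '' S) w' / (1 - ε) := by
          intro x hx
          set i : ↥S := ⟨x, hx⟩
          have h1 : ‖(∑ j, lS j • u j) - u i‖ ^ 2 + ω i ^ 2 ≤ pwG u ω lS :=
            pwG_strong u ω lS hlS hmaxS i
          have h2 : (1 - ε) ^ 2 * pwG u ω lS ≤ pwG v ω lS :=
            (pwG_distort u v ω lS hlS hε0 hε1.le hdist).1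
          have h3 : pwG v ω lS ≤ (powerRadius (f '' S) w') ^ 2 := weakF lS hlS
          have h4 : dist (∑ j, lS j • u j) x ^ 2 + w x ^ 2
              ≤ (powerRadius (f '' S) w' / (1 - ε)) ^ 2 := by
            have hd : dist (∑ j, lS j • u j) x = ‖(∑ j, lS j • u j) - u i‖ := dist_eq_norm _ _
            have hε' : (0:ℝ) < 1 - ε := by linarith
            rw [hd, div_pow]
            rw [le_div_iff₀ (pow_pos hε' 2)]
            nlinarith [h1, h2, h3]
          calc Real.sqrt (dist (∑ j, lS j • u j) x ^ 2 + w x ^ 2)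
              ≤ Real.sqrt ((powerRadius (f '' S) w' / (1 - ε)) ^ 2) := Real.sqrt_le_sqrt h4
            _ = powerRadius (f '' S) w' / (1 - ε) :=
                Real.sqrt_sq (div_nonneg hρ'0 (by linarith))
        calc powerRadius S w
            ≤ ⨆ x ∈ S, Real.sqrt (dist (∑ j, lS j • u j) x ^ 2 + w x ^ 2) :=
              powerRadius_le S w _
          _ ≤ powerRadius (f '' S) w' / (1 - ε) :=
              biSup_le_fin _ (div_nonneg hρ'0 (by linarith)) key
      have hε' : (0:ℝ) < 1 - ε := by linarith
      rw [le_div_iff₀ hε'] at hro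
      linarith
    · -- upper bound : ρ' ≤ (1+ε) ρ
      have key : ∀ z ∈ f '' S, Real.sqrt (dist (∑ j, lF j • v j) z ^ 2 + w' z ^ 2)
          ≤ (1 + ε) * powerRadius S w := by
        rintro z ⟨x, hx, rfl⟩
        set i : ↥S := ⟨x, hx⟩
        have h1 : ‖(∑ j, lF j • v j) - v i‖ ^ 2 + ω i ^ 2 ≤ pwG v ω lF :=
          pwG_strong v ω lF hlF hmaxF i
        have h2 : pwG v ω lF ≤ (1 + ε) ^ 2 * pwG u ω lF :=
          (pwG_distort u v ω lF hlF hε0 hε1.le hdist).2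
        have h3 : pwG u ω lF ≤ (powerRadius S w) ^ 2 := weakS lF hlF
        have hwi : w' (f x) = ω i := hww x hx
        have h4 : dist (∑ j, lF j • v j) (f x) ^ 2 + w' (f x) ^ 2
            ≤ ((1 + ε) * powerRadius S w) ^ 2 := by
          have hd : dist (∑ j, lF j • v j) (f x) = ‖(∑ j, lF j • v j) - v i‖ :=
            dist_eq_norm _ _
          rw [hd, hwi, mul_pow]
          nlinarith [h1, h2, h3]
        calc Real.sqrt (dist (∑ j, lF j • v j) (f x) ^ 2 + w' (f x) ^ 2)
            ≤ Real.sqrt (((1 + ε) * powerRadius S w) ^ 2) := Real.sqrt_le_sqrt h4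
          _ = (1 + ε) * powerRadius S w := Real.sqrt_sq (mul_nonneg (by linarith) hρ0)
      calc powerRadius (f '' S) w'
          ≤ ⨆ z ∈ f '' S, Real.sqrt (dist (∑ j, lF j • v j) z ^ 2 + w' z ^ 2) :=
            powerRadius_le (f '' S) w' _
        _ ≤ (1 + ε) * powerRadius S w :=
            biSup_le_fin _ (mul_nonneg (by linarith) hρ0) key
end
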